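/- arXiv:1903.02998 — 7 statements merged into one kernel-verified Lean document; each statement's English description precedes it below -/
import Mathlib

section
/- Let d ≥ 1 and let F ⊆ binom(ℕ,d) be a finite compressed family of d-sets. Then for every family F' ⊆ binom(ℕ,d) with |F'| = |F| one has |Inc(F')| ≥ |Inc(F)|. (Compressed sets minimize the cardinality of the Inc-image among all families of the same size.) -/
def Inc1 : Set (ℕ → ℕ) := {π | StrictMono π ∧ ∀ j, π j ≤ j + 1}

def incF (F : Set (Finset ℕ)) : Set (Finset ℕ) :=
  {v | ∃ u ∈ F, ∃ π ∈ Inc1, v = u.image π}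

def compressionIn (A : Set ℕ) (d n : ℕ) : Set (Finset ℕ) :=
  {v | ↑v ⊆ A ∧ v.card = d ∧
    {w : Finset ℕ | ↑w ⊆ A ∧ w.card = d ∧ toColex w ≤ toColex v}.ncard ≤ n}

def IsCompressedIn (A : Set ℕ) (d : ℕ) (F : Set (Finset ℕ)) : Prop :=
  (∀ u ∈ F, ↑u ⊆ A ∧ u.card = d) ∧
  ∀ u ∈ F, ∀ v : Finset ℕ, ↑v ⊆ A → v.card = d → toColex v ≤ toColex u → v ∈ F

def hatL (F : Set (Finset ℕ)) (k : ℕ) : Set (Finset ℕ) :=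
  {u | (∀ x ∈ u, k < x) ∧ insert k u ∈ F}

def hatR (F : Set (Finset ℕ)) (k : ℕ) : Set (Finset ℕ) :=
  {u | (∀ x ∈ u, x < k) ∧ insert k u ∈ F}

def leftComp (d : ℕ) (F : Set (Finset ℕ)) : Set (Finset ℕ) :=
  ⋃ k : ℕ, {v | ∃ w ∈ compressionIn {j | k < j} (d - 1) (hatL F k).ncard, v = insert k w}

def rightComp (d : ℕ) (F : Set (Finset ℕ)) : Set (Finset ℕ) :=
  ⋃ k : ℕ, {v | ∃ w ∈ compressionIn Set.univ (d - 1) (hatR F k).ncard, v = insert k w}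

def BorelLE (u v : Finset ℕ) : Prop :=
  List.Forall₂ (· ≤ ·) (u.sort (· ≤ ·)) (v.sort (· ≤ ·))

def IsShifted (F : Set (Finset ℕ)) : Prop :=
  ∀ u ∈ F, ∀ v, BorelLE v u → v ∈ F

def piShift (i : ℕ) : ℕ → ℕ := fun j => if j < i then j else j + 1

def IsBinRep (d m s : ℕ) (a : ℕ → ℕ) : Prop :=
  1 ≤ s ∧ s ≤ d ∧ (∀ i, s ≤ i → i < d → a i < a (i + 1)) ∧ s ≤ a s ∧
    m = ∑ i ∈ Finset.Icc s d, Nat.choose (a i) i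

def famLE (F G : Set (Finset ℕ)) : Prop :=
  F = G ∨ ∃ m ∈ G, m ∉ F ∧
    ∀ w : Finset ℕ, (w ∈ F ∧ w ∉ G) ∨ (w ∈ G ∧ w ∉ F) → toColex w ≤ toColex m

def IsSimplicialComplex (Δ : Set (Finset ℕ)) : Prop :=
  Δ.Finite ∧ ∀ F ∈ Δ, ∀ G ⊆ F, G ∈ Δ


namespace IncKK

/-- `a ≤ C(a+b, b+1)` -/
lemma le_choose_add (a b : ℕ) : a ≤ Nat.choose (a + b) (b + 1) := by
  induction a with
  | zero => exact Nat.zero_le _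
  | succ a ih =>
    have h : Nat.choose (a + b + 1) (b + 1) = Nat.choose (a + b) b + Nat.choose (a + b) (b + 1) :=
      Nat.choose_succ_succ _ _
    have hpos : 0 < Nat.choose (a + b) b := Nat.choose_pos (Nat.le_add_left _ _)
    have : a + 1 + b = a + b + 1 := by omega
    rw [this, h]; omega

lemma choose_mono_left {k m n : ℕ} (h : m ≤ n) : Nat.choose m k ≤ Nat.choose n k :=
  Nat.choose_mono _ h

/-- the Macaulay-type growth function -/
def G : ℕ → ℕ → ℕ
  | 0, m => min m 1
  | (d+1), m =>
    if m = 0 then 0 else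
      Nat.choose (Nat.findGreatest (fun n => Nat.choose n (d+1) < m) (m + d + 2) + 1) (d+1)
        + G d (m - Nat.choose (Nat.findGreatest (fun n => Nat.choose n (d+1) < m) (m + d + 2)) (d+1))

/-- the level of `m` at dimension `d+1` -/
def lvl (d m : ℕ) : ℕ := Nat.findGreatest (fun n => Nat.choose n (d+1) < m) (m + d + 2)

lemma G_zero (d : ℕ) : G d 0 = 0 := by
  cases d with
  | zero => simp [G]
  | succ d => simp [G]

lemma G_succ_eq (d m : ℕ) (hm : m ≠ 0) :
    G (d+1) m = Nat.choose (lvl d m + 1) (d+1) + G d (m - Nat.choose (lvl d m) (d+1)) := by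
  rw [G]; simp [hm, lvl]

lemma lvl_spec (d m : ℕ) (hm : 1 ≤ m) :
    Nat.choose (lvl d m) (d+1) < m ∧ m ≤ Nat.choose (lvl d m + 1) (d+1) ∧ d ≤ lvl d m := by
  have hd : d ≤ lvl d m := by
    apply Nat.le_findGreatest (by omega)
    simpa [Nat.choose_eq_zero_of_lt (Nat.lt_succ_self d)] using (show 0 < m from hm)
  have h1 : Nat.choose (lvl d m) (d+1) < m := by
    have := Nat.findGreatest_spec (P := fun n => Nat.choose n (d+1) < m) (m := d) (n := m + d + 2)
      (by omega) (by simpa [Nat.choose_eq_zero_of_lt (Nat.lt_succ_self d)] using (show 0 < m from hm))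
    simpa [lvl] using this
  refine ⟨h1, ?_, hd⟩
  by_cases hT : lvl d m < m + d + 2
  · -- maximality
    by_contra hlt
    push_neg at hlt
    have := Nat.findGreatest_is_greatest (P := fun n => Nat.choose n (d+1) < m)
      (n := m + d + 2) (k := lvl d m + 1) (Nat.lt_succ_self _) (by omega)
    exact this hlt
  · push_neg at hT
    have h2 : m + d + 2 ≤ lvl d m := hT
    have : m + 2 ≤ Nat.choose (m + 2 + d) (d+1) := le_choose_add (m+2) d
    calc m ≤ Nat.choose (m + 2 + d) (d+1) := by omega
    _ ≤ Nat.choose (lvl d m + 1) (d+1) := choose_mono_left (by omega)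

lemma lvl_unique (d m S : ℕ) (h1 : Nat.choose S (d+1) < m) (h2 : m ≤ Nat.choose (S+1) (d+1)) :
    S = lvl d m := by
  have hm : 1 ≤ m := by omega
  obtain ⟨g1, g2, _⟩ := lvl_spec d m hm
  rcases lt_trichotomy S (lvl d m) with h | h | h
  · have : Nat.choose (S+1) (d+1) ≤ Nat.choose (lvl d m) (d+1) := choose_mono_left (by omega)
    omega
  · exact h
  · have : Nat.choose (lvl d m + 1) (d+1) ≤ Nat.choose S (d+1) := choose_mono_left (by omega)
    omega

/-- The fundamental recursion, in "representation" form. -/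
lemma G_rep (d T r : ℕ) (h1 : 1 ≤ r) (h2 : r ≤ Nat.choose T d) :
    G (d+1) (Nat.choose T (d+1) + r) = Nat.choose (T+1) (d+1) + G d r := by
  have hT : T = lvl d (Nat.choose T (d+1) + r) := by
    apply lvl_unique
    · omega
    · rw [Nat.choose_succ_succ']; omega
  rw [G_succ_eq d _ (by omega), ← hT]
  have : Nat.choose T (d+1) + r - Nat.choose T (d+1) = r := by omega
  rw [this]

lemma G_full : ∀ d T, d ≤ T → G d (Nat.choose T d) = Nat.choose (T+1) d := by
  intro d
  induction d with
  | zero => intro T _; simp [G]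
  | succ d ih =>
    intro T hT
    obtain ⟨T, rfl⟩ : ∃ S, T = S + 1 := ⟨T - 1, by omega⟩
    have hP : Nat.choose (T+1) (d+1) = Nat.choose T d + Nat.choose T (d+1) :=
      Nat.choose_succ_succ' _ _
    have h1 : 1 ≤ Nat.choose T d := Nat.choose_pos (by omega)
    have hrep := G_rep d T (Nat.choose T d) h1 le_rfl
    have hGd : G d (Nat.choose T d) = Nat.choose (T+1) d := by
      cases d with
      | zero => simp [G]
      | succ e => exact ih T (by omega)
    have hP2 := Nat.choose_succ_succ' (T+1) d
    rw [hP, Nat.add_comm (Nat.choose T d) (Nat.choose T (d+1)), hrep, hGd]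
    omega

lemma G_split (d T z : ℕ) (h : d + 1 ≤ T) (hz : z ≤ Nat.choose T d) :
    G (d+1) (Nat.choose T (d+1) + z) = Nat.choose (T+1) (d+1) + G d z := by
  rcases Nat.eq_zero_or_pos z with rfl | hz1
  · simp [G_zero, G_full (d+1) T h]
  · exact G_rep d T z hz1 hz

lemma G_one_val : ∀ d, G d 1 = d + 1 := by
  intro d
  induction d with
  | zero => simp [G]
  | succ d ih =>
    have hc : Nat.choose d (d+1) = 0 := Nat.choose_eq_zero_of_lt (by omega)
    have h := G_rep d d 1 le_rfl (by rw [Nat.choose_self])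
    rw [hc, Nat.zero_add, ih, Nat.choose_self] at h
    omega

lemma G_one (m : ℕ) (h : 1 ≤ m) : G 1 m = m + 1 := by
  have h2 := G_rep 0 (m-1) 1 le_rfl (by rw [Nat.choose_zero_right])
  rw [Nat.choose_one_right, Nat.choose_one_right] at h2
  have h3 : m - 1 + 1 = m := by omega
  rw [h3] at h2
  have h4 : G 0 1 = 1 := by simp [G]
  have h2' : G 1 m = m + G 0 1 := h2
  omega

lemma G_step : ∀ d m, G (d+1) m + 1 ≤ G (d+1) (m+1) := by
  intro d
  induction d with
  | zero =>
    intro m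
    rcases Nat.eq_zero_or_pos m with rfl | hm
    · rw [G_zero, G_one_val]; omega
    · rw [G_one m hm, G_one (m+1) (by omega)]
  | succ d ih =>
    intro m
    rcases Nat.eq_zero_or_pos m with rfl | hm
    · rw [G_zero, G_one_val]; omega
    obtain ⟨h1', h2', h3⟩ := lvl_spec (d+1) m hm
    set T := lvl (d+1) m with hTdef
    have h1 : Nat.choose T (d+2) < m := h1'
    have h2 : m ≤ Nat.choose (T+1) (d+2) := h2'
    set r := m - Nat.choose T (d+2) with hrdef
    have hr1 : 1 ≤ r := by omega
    have hm_eq : m = Nat.choose T (d+2) + r := by omega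
    have hPT : Nat.choose (T+1) (d+2) = Nat.choose T (d+1) + Nat.choose T (d+2) :=
      Nat.choose_succ_succ' T (d+1)
    have hrw : r ≤ Nat.choose T (d+1) := by omega
    have hGm : G (d+2) m = Nat.choose (T+1) (d+2) + G (d+1) r := by
      rw [hm_eq]; exact G_rep (d+1) T r hr1 hrw
    rcases lt_or_eq_of_le hrw with hlt | heq
    · have hGm1 : G (d+2) (m+1) = Nat.choose (T+1) (d+2) + G (d+1) (r+1) := by
        have hme : m + 1 = Nat.choose T (d+2) + (r+1) := by omega
        rw [hme]; exact G_rep (d+1) T (r+1) (by omega) (by omega)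
      have := ih r
      have hGoal : G (d+1+1) m = G (d+2) m := rfl
      have hGoal2 : G (d+1+1) (m+1) = G (d+2) (m+1) := rfl
      omega
    · -- r is full width; m = C(T+1,d+2)
      have hm_full : m = Nat.choose (T+1) (d+2) := by omega
      have hGm1 : G (d+2) (m+1) = Nat.choose (T+2) (d+2) + G (d+1) 1 := by
        rw [hm_full]
        exact G_rep (d+1) (T+1) 1 le_rfl (Nat.choose_pos (by omega))
      have hGfull : G (d+1) r = Nat.choose (T+1) (d+1) := by
        rw [heq]; exact G_full (d+1) T (by omega)
      have hP : Nat.choose (T+2) (d+2) = Nat.choose (T+1) (d+1) + Nat.choose (T+1) (d+2) :=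
        Nat.choose_succ_succ' _ _
      have hOne : G (d+1) 1 = d + 2 := G_one_val (d+1)
      have hGoal : G (d+1+1) m = G (d+2) m := rfl
      have hGoal2 : G (d+1+1) (m+1) = G (d+2) (m+1) := rfl
      omega

lemma G_add_le (d x k : ℕ) : G (d+1) x + k ≤ G (d+1) (x + k) := by
  induction k with
  | zero => simp
  | succ k ih =>
    have h1 := G_step d (x + k)
    have h2 : x + (k+1) = (x + k) + 1 := rfl
    rw [h2]
    omega

lemma G_mono (d : ℕ) {x y : ℕ} (h : x ≤ y) : G (d+1) x ≤ G (d+1) y := by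
  have h1 := G_add_le d x (y - x)
  have hxy : x + (y - x) = y := by omega
  rw [hxy] at h1
  omega

lemma G_gamma_mono (d : ℕ) {x y : ℕ} (h : x ≤ y) : G (d+1) x + y ≤ G (d+1) y + x := by
  have h1 := G_add_le d x (y - x)
  have hxy : x + (y - x) = y := by omega
  rw [hxy] at h1
  omega

lemma G_ge_self (d m : ℕ) : m ≤ G (d+1) m := by
  have h1 := G_add_le d 0 m
  simpa [G_zero] using h1

lemma G_ge_succ (d m : ℕ) (hm : 1 ≤ m) : m + 1 ≤ G (d+1) m := by
  have h1 := G_add_le d 1 (m - 1)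
  have hxy : 1 + (m - 1) = m := by omega
  rw [hxy, G_one_val] at h1
  omega
lemma G_step_upper : ∀ d m, G (d+1) (m+1) ≤ G (d+1) m + (d+2) := by
  intro d
  induction d with
  | zero =>
    intro m
    rcases Nat.eq_zero_or_pos m with rfl | hm
    · rw [G_zero, G_one_val]
    · rw [G_one m hm, G_one (m+1) (by omega)]; omega
  | succ d ih =>
    intro m
    rcases Nat.eq_zero_or_pos m with rfl | hm
    · rw [G_zero, G_one_val]; omega
    obtain ⟨h1', h2', h3⟩ := lvl_spec (d+1) m hm
    set T := lvl (d+1) m with hTdef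
    have h1 : Nat.choose T (d+2) < m := h1'
    have h2 : m ≤ Nat.choose (T+1) (d+2) := h2'
    set r := m - Nat.choose T (d+2) with hrdef
    have hr1 : 1 ≤ r := by omega
    have hm_eq : m = Nat.choose T (d+2) + r := by omega
    have hPT : Nat.choose (T+1) (d+2) = Nat.choose T (d+1) + Nat.choose T (d+2) :=
      Nat.choose_succ_succ' T (d+1)
    have hrw : r ≤ Nat.choose T (d+1) := by omega
    have hGm : G (d+2) m = Nat.choose (T+1) (d+2) + G (d+1) r := by
      rw [hm_eq]; exact G_rep (d+1) T r hr1 hrw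
    have hGoal : G (d+1+1) m = G (d+2) m := rfl
    have hGoal2 : G (d+1+1) (m+1) = G (d+2) (m+1) := rfl
    rcases lt_or_eq_of_le hrw with hlt | heq
    · have hGm1 : G (d+2) (m+1) = Nat.choose (T+1) (d+2) + G (d+1) (r+1) := by
        have hme : m + 1 = Nat.choose T (d+2) + (r+1) := by omega
        rw [hme]; exact G_rep (d+1) T (r+1) (by omega) (by omega)
      have := ih r
      omega
    · have hm_full : m = Nat.choose (T+1) (d+2) := by omega
      have hGm1 : G (d+2) (m+1) = Nat.choose (T+2) (d+2) + G (d+1) 1 := by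
        rw [hm_full]
        exact G_rep (d+1) (T+1) 1 le_rfl (Nat.choose_pos (by omega))
      have hGfull : G (d+1) r = Nat.choose (T+1) (d+1) := by
        rw [heq]; exact G_full (d+1) T (by omega)
      have hP : Nat.choose (T+2) (d+2) = Nat.choose (T+1) (d+1) + Nat.choose (T+1) (d+2) :=
        Nat.choose_succ_succ' (T+1) (d+1)
      have hOne : G (d+1) 1 = d + 2 := G_one_val (d+1)
      omega

/-- windows ending at a binomial boundary have minimal increment -/
def WindowP (e : ℕ) : Prop :=
  ∀ L x y T, x + L = Nat.choose T e → y + L ≤ Nat.choose T e →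
    G e (x + L) + G e y ≤ G e (y + L) + G e x

def SubaddP (e : ℕ) : Prop := ∀ x y, G e (x + y) ≤ G e x + G e y

lemma subadd_zero : SubaddP 0 := by
  intro x y
  simp only [G]
  omega

lemma window_one : WindowP 1 := by
  intro L x y T hx hy
  have hyx : y ≤ x := by omega
  rcases Nat.eq_zero_or_pos L with rfl | hL
  · simp only [Nat.add_zero]; omega
  rcases Nat.eq_zero_or_pos y with rfl | hy1
  · rw [Nat.zero_add, G_zero, Nat.add_zero, G_one (x+L) (by omega), G_one L hL]
    have : x ≤ G 1 x := G_ge_self 0 x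
    omega
  · rw [G_one (x+L) (by omega), G_one (y+L) (by omega), G_one y hy1, G_one x (by omega)]
    omega

lemma subadd_one : SubaddP 1 := by
  intro x y
  rcases Nat.eq_zero_or_pos x with rfl | hx
  · simp [G_zero]
  rcases Nat.eq_zero_or_pos y with rfl | hy
  · simp [G_zero]
  rw [G_one x hx, G_one y hy, G_one (x+y) (by omega)]
  omega

lemma mono_cd (d : ℕ) (hs : SubaddP d) : ∀ S, G d (Nat.choose S (d+1)) ≤ Nat.choose (S+1) (d+1) := by
  intro S
  induction S with
  | zero =>
    rw [Nat.choose_eq_zero_of_lt (by omega), G_zero]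
    exact Nat.zero_le _
  | succ S ih =>
    have hP : Nat.choose (S+1) (d+1) = Nat.choose S d + Nat.choose S (d+1) :=
      Nat.choose_succ_succ' S d
    have hsub := hs (Nat.choose S (d+1)) (Nat.choose S d)
    have hfull : G d (Nat.choose S d) ≤ Nat.choose (S+1) d := by
      by_cases hSd : d ≤ S
      · rw [G_full d S hSd]
      · rw [Nat.choose_eq_zero_of_lt (by omega), G_zero]; exact Nat.zero_le _
    have hP2 := Nat.choose_succ_succ' (S+1) d
    calc G d (Nat.choose (S+1) (d+1))
        = G d (Nat.choose S (d+1) + Nat.choose S d) := by rw [hP]; ring_nf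
      _ ≤ G d (Nat.choose S (d+1)) + G d (Nat.choose S d) := hs _ _
      _ ≤ Nat.choose (S+1) (d+1) + Nat.choose (S+1) d := by
          have := ih; omega
      _ ≤ Nat.choose (S+1+1) (d+1) := by omega

lemma mono_d (d : ℕ) (hs : SubaddP d) : ∀ z, G d z ≤ G (d+1) z := by
  intro z
  rcases Nat.eq_zero_or_pos z with rfl | hz
  · rw [G_zero, G_zero]
  obtain ⟨h1, h2, h3⟩ := lvl_spec d z hz
  set S := lvl d z with hS
  set r := z - Nat.choose S (d+1) with hr
  have hz_eq : z = Nat.choose S (d+1) + r := by omega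
  have hP := Nat.choose_succ_succ' S d
  have hrw : r ≤ Nat.choose S d := by omega
  have hGz : G (d+1) z = Nat.choose (S+1) (d+1) + G d r := by
    rw [hz_eq]; exact G_rep d S r (by omega) hrw
  have hsub : G d z ≤ G d (Nat.choose S (d+1)) + G d r := by
    rw [hz_eq]; exact hs _ _
  have := mono_cd d hs S
  omega
lemma window_subadd : ∀ d, WindowP (d+1) ∧ SubaddP (d+1) := by
  intro d
  induction d with
  | zero => exact ⟨window_one, subadd_one⟩
  | succ d ih =>
    obtain ⟨ihW, ihS⟩ := ih
    have hnorm : d + 1 + 1 = d + 2 := rfl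
    have hmono : ∀ z, G (d+1) z ≤ G (d+2) z := by
      have := mono_d (d+1) ihS
      simpa [hnorm] using this
    have hW : WindowP (d+2) := by
      intro L
      induction L using Nat.strong_induction_on with
      | _ L IH =>
      intro x y T hx hy
      rcases Nat.eq_zero_or_pos L with rfl | hL
      · simp only [Nat.add_zero]; omega
      have hc1 : 1 ≤ Nat.choose T (d+2) := by omega
      have hT2 : d + 2 ≤ T := by
        by_contra hcon
        push_neg at hcon
        rw [Nat.choose_eq_zero_of_lt hcon] at hc1
        omega
      obtain ⟨T, rfl⟩ : ∃ S, T = S + 1 := ⟨T - 1, by omega⟩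
      have hPas : Nat.choose (T+1) (d+2) = Nat.choose T (d+1) + Nat.choose T (d+2) := by
        have := Nat.choose_succ_succ' T (d+1)
        simpa [hnorm] using this
      by_cases hLw : Nat.choose T (d+1) < L
      · -- case 4 : window longer than the top block width
        have hw1 : 1 ≤ Nat.choose T (d+1) := Nat.choose_pos (by omega)
        set w := Nat.choose T (d+1) with hwdef
        have hIH1 := IH w hLw (Nat.choose T (d+2)) (y + L - w) (T+1) (by omega) (by omega)
        have hIH2 := IH (L - w) (by omega) x y T (by omega) (by omega)
        have he0 : Nat.choose T (d+2) + w = x + L := by omega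
        have he1 : y + L - w + w = y + L := by omega
        have he2 : x + (L - w) = Nat.choose T (d+2) := by omega
        have he3 : y + (L - w) = y + L - w := by omega
        rw [he0, he1] at hIH1
        rw [he2, he3] at hIH2
        omega
      · -- L ≤ w
        push_neg at hLw
        have hyL1 : 1 ≤ y + L := by omega
        obtain ⟨s1', s2', s3'⟩ := lvl_spec (d+1) (y+L) hyL1
        set S := lvl (d+1) (y + L) with hSdef
        have s1 : Nat.choose S (d+2) < y + L := s1'
        have s2 : y + L ≤ Nat.choose (S+1) (d+2) := s2'
        have s3 : d + 1 ≤ S := s3'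
        have hPasS : Nat.choose (S+1) (d+2) = Nat.choose S (d+1) + Nat.choose S (d+2) := by
          have := Nat.choose_succ_succ' S (d+1)
          simpa [hnorm] using this
        have hST : S ≤ T := by
          by_contra hcon
          push_neg at hcon
          have : Nat.choose (T+1) (d+2) ≤ Nat.choose S (d+2) := choose_mono_left (by omega)
          omega
        by_cases hin : Nat.choose S (d+2) ≤ y
        · -- window inside a single block
          by_cases hS : d + 2 ≤ S
          · set y2 := y - Nat.choose S (d+2) with hy2def
            have hy2w : y2 + L ≤ Nat.choose S (d+1) := by omega
            have hGy : G (d+2) y = Nat.choose (S+1) (d+2) + G (d+1) y2 := by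
              have h := G_split (d+1) S y2 hS (by omega)
              simp only [hnorm] at h
              rw [show y = Nat.choose S (d+2) + y2 from by omega]
              exact h
            have hGyL : G (d+2) (y + L) = Nat.choose (S+1) (d+2) + G (d+1) (y2 + L) := by
              have h := G_split (d+1) S (y2 + L) hS hy2w
              simp only [hnorm] at h
              rw [show y + L = Nat.choose S (d+2) + (y2 + L) from by omega]
              exact h
            have hTS : d + 2 ≤ T := by omega
            have hGx : G (d+2) x = Nat.choose (T+1) (d+2) + G (d+1) (Nat.choose T (d+1) - L) := by
              have h := G_split (d+1) T (Nat.choose T (d+1) - L) hTS (by omega)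
              simp only [hnorm] at h
              rw [show x = Nat.choose T (d+2) + (Nat.choose T (d+1) - L) from by omega]
              exact h
            have hGc : G (d+2) (x + L) = Nat.choose (T+1) (d+2) + G (d+1) (Nat.choose T (d+1)) := by
              have h := G_split (d+1) T (Nat.choose T (d+1)) hTS le_rfl
              simp only [hnorm] at h
              rw [show x + L = Nat.choose T (d+2) + Nat.choose T (d+1) from by omega]
              exact h
            have hwin := ihW L (Nat.choose T (d+1) - L) y2 T (by omega)
              (le_trans (by omega) (choose_mono_left (show S ≤ T by omega)))
            have heL : Nat.choose T (d+1) - L + L = Nat.choose T (d+1) := by omega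
            rw [heL] at hwin
            omega
          · -- degenerate tiny block : y = 0, L = 1
            push_neg at hS
            have hSd : S = d + 1 := by omega
            have hb1 : Nat.choose (S+1) (d+2) = 1 := by
              rw [hSd]; exact Nat.choose_self _
            have hy0 : y = 0 := by
              have := Nat.choose_eq_zero_of_lt (show S < d + 2 by omega)
              omega
            have hL1 : L = 1 := by omega
            subst hy0 hL1
            have hstep := G_step_upper (d+1) x
            simp only [hnorm] at hstep
            have hone : G (d+2) 1 = d + 3 := by
              have := G_one_val (d+2); omega
            rw [Nat.zero_add, G_zero]
            omega
        · -- crossing case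
          push_neg at hin
          have hbS1 : 1 ≤ Nat.choose S (d+2) := by omega
          have hS : d + 2 ≤ S := by
            by_contra hcon
            push_neg at hcon
            rw [Nat.choose_eq_zero_of_lt hcon] at hbS1
            omega
          set z := y + L - Nat.choose S (d+2) with hzdef
          set lam := Nat.choose S (d+2) - y with hlamdef
          have hz1 : 1 ≤ z := by omega
          have hlam1 : 1 ≤ lam := by omega
          have hzlam : z + lam = L := by omega
          have hzw : z ≤ Nat.choose S (d+1) := by omega
          have hIH := IH lam (by omega) (x + z) y (T+1) (by omega) (by omega)
          -- hIH : G (d+2) (x + z + lam) + G (d+2) y ≤ G (d+2) (y + lam) + G (d+2) (x + z)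
          have he1 : x + z + lam = x + L := by omega
          have he2 : y + lam = Nat.choose S (d+2) := by omega
          rw [he1, he2] at hIH
          have hGyL : G (d+2) (y + L) = Nat.choose (S+1) (d+2) + G (d+1) z := by
            have h := G_split (d+1) S z hS hzw
            simp only [hnorm] at h
            rw [show y + L = Nat.choose S (d+2) + z from by omega]
            exact h
          have hGbS : G (d+2) (Nat.choose S (d+2)) = Nat.choose (S+1) (d+2) := by
            have h := G_full (d+2) S hS
            exact h
          have hTS : d + 2 ≤ T := by
            have : S ≤ T := hST
            omega
          set x2 := x - Nat.choose T (d+2) with hx2def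
          have hx2 : x = Nat.choose T (d+2) + x2 := by omega
          have hx2z : x2 + z ≤ Nat.choose T (d+1) := by omega
          have hGx : G (d+2) x = Nat.choose (T+1) (d+2) + G (d+1) x2 := by
            have h := G_split (d+1) T x2 hTS (by omega)
            simp only [hnorm] at h
            rw [show x = Nat.choose T (d+2) + x2 from by omega]
            exact h
          have hGxz : G (d+2) (x + z) = Nat.choose (T+1) (d+2) + G (d+1) (x2 + z) := by
            have h := G_split (d+1) T (x2 + z) hTS hx2z
            simp only [hnorm] at h
            rw [show x + z = Nat.choose T (d+2) + (x2 + z) from by omega]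
            exact h
          have hsub := ihS x2 z
          omega
    have hS2 : SubaddP (d+2) := by
      have key : ∀ x0 y0, 1 ≤ x0 → 1 ≤ y0 → y0 ≤ x0 →
          G (d+2) (x0 + y0) ≤ G (d+2) x0 + G (d+2) y0 := by
        intro x0 y0 hx0 hy0 hyx
        have hm1 : 1 ≤ x0 + y0 := by omega
        obtain ⟨h1', h2', h3'⟩ := lvl_spec (d+1) (x0 + y0) hm1
        set T := lvl (d+1) (x0 + y0) with hTdef
        have h1 : Nat.choose T (d+2) < x0 + y0 := h1'
        have h2 : x0 + y0 ≤ Nat.choose (T+1) (d+2) := h2'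
        have hPas : Nat.choose (T+1) (d+2) = Nat.choose T (d+1) + Nat.choose T (d+2) := by
          have := Nat.choose_succ_succ' T (d+1)
          simpa [hnorm] using this
        set R := x0 + y0 - Nat.choose T (d+2) with hRdef
        have hR1 : 1 ≤ R := by omega
        have hRw : R ≤ Nat.choose T (d+1) := by omega
        by_cases hc0 : Nat.choose T (d+2) = 0
        · -- then x0 + y0 = R ≤ width;  T = d+1 and width = 1, so x0+y0 = 1: impossible
          have hTd : T = d + 1 := by
            have : d + 2 ≤ T ∨ T < d + 2 := by omega
            rcases this with h | h
            · exfalso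
              have := Nat.choose_pos (show d + 2 ≤ T from h)
              omega
            · omega
          have : Nat.choose (T+1) (d+2) = 1 := by rw [hTd]; exact Nat.choose_self _
          omega
        · have hc1 : 1 ≤ Nat.choose T (d+2) := by omega
          have hT2 : d + 2 ≤ T := by
            by_contra hcon
            push_neg at hcon
            rw [Nat.choose_eq_zero_of_lt hcon] at hc1
            omega
          have hGm : G (d+2) (x0 + y0) = Nat.choose (T+1) (d+2) + G (d+1) R := by
            have h := G_split (d+1) T R hT2 hRw
            simp only [hnorm] at h
            rw [show x0 + y0 = Nat.choose T (d+2) + R from by omega]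
            exact h
          by_cases hx0c : x0 ≤ Nat.choose T (d+2)
          · -- both below the boundary: use the window property
            have hRy : R ≤ y0 := by omega
            have hwin := hW (y0 - R) x0 R T (by omega) (by omega)
            have he1 : x0 + (y0 - R) = Nat.choose T (d+2) := by omega
            have he2 : R + (y0 - R) = y0 := by omega
            rw [he1, he2] at hwin
            have hGc : G (d+2) (Nat.choose T (d+2)) = Nat.choose (T+1) (d+2) :=
              G_full (d+2) T hT2
            have := hmono R
            omega
          · -- x0 exceeds the boundary
            push_neg at hx0c
            set s := x0 - Nat.choose T (d+2) with hsdef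
            have hs1 : 1 ≤ s := by omega
            have hsR : s + y0 = R := by omega
            have hGx0 : G (d+2) x0 = Nat.choose (T+1) (d+2) + G (d+1) s := by
              have h := G_split (d+1) T s hT2 (by omega)
              simp only [hnorm] at h
              rw [show x0 = Nat.choose T (d+2) + s from by omega]
              exact h
            have hsub := ihS s y0
            rw [hsR] at hsub
            have := hmono y0
            omega
      intro x0 y0
      rcases Nat.eq_zero_or_pos x0 with rfl | hx0
      · simp [G_zero]
      rcases Nat.eq_zero_or_pos y0 with rfl | hy0
      · simp [G_zero]
      rcases le_total y0 x0 with h | h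
      · exact key x0 y0 hx0 hy0 h
      · have := key y0 x0 hy0 hx0 h
        rw [Nat.add_comm x0 y0]
        omega
    exact ⟨hW, hS2⟩

lemma G_window (d : ℕ) : WindowP (d+1) := (window_subadd d).1
lemma G_subadd (d : ℕ) : SubaddP (d+1) := (window_subadd d).2
lemma G_mono_d (d : ℕ) : ∀ z, G d z ≤ G (d+1) z := by
  cases d with
  | zero =>
    intro z
    rcases Nat.eq_zero_or_pos z with rfl | hz
    · rw [G_zero, G_zero]
    · have h0 : G 0 z = 1 := by simp [G]; omega
      have := G_ge_succ 0 z hz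
      omega
  | succ d => exact mono_d (d+1) (G_subadd d)
lemma G_mono_all (d : ℕ) {x y : ℕ} (h : x ≤ y) : G d x ≤ G d y := by
  cases d with
  | zero => simp only [G]; omega
  | succ d => exact G_mono d h

lemma G_lemA : ∀ d m k, G (d+1) m ≤ m + k → G (d+1) (m+k) ≤ (m+k) + G d k := by
  intro d
  induction d with
  | zero =>
    intro m k hyp
    rcases Nat.eq_zero_or_pos (m+k) with h0 | h1
    · rw [h0, G_zero]; omega
    rcases Nat.eq_zero_or_pos k with rfl | hk
    · exfalso
      have hm : 1 ≤ m := by omega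
      rw [G_one m hm] at hyp
      omega
    · rw [G_one (m+k) h1]
      have : G 0 k = 1 := by simp [G]; omega
      omega
  | succ d ih =>
    intro m k hyp
    rcases Nat.eq_zero_or_pos (m+k) with h0 | hmk
    · rw [h0, G_zero]; omega
    by_cases hone : m + k = 1
    · rw [hone]
      rcases Nat.eq_zero_or_pos k with rfl | hk
      · exfalso
        have hm : m = 1 := by omega
        rw [hm] at hyp
        rw [G_one_val] at hyp
        omega
      · have hk1 : k = 1 := by omega
        rw [G_one_val, hk1, G_one_val]
        omega
    -- m + k ≥ 2
    show G (d+2) (m+k) ≤ (m+k) + G (d+1) k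
    have hyp2 : G (d+2) m ≤ m + k := hyp
    clear hyp
    obtain ⟨T, h1, h2, h3⟩ : ∃ T, Nat.choose T (d+2) < m + k ∧
        m + k ≤ Nat.choose (T+1) (d+2) ∧ d + 1 ≤ T := by
      obtain ⟨u1, u2, u3⟩ := lvl_spec (d+1) (m+k) hmk
      exact ⟨lvl (d+1) (m+k), u1, u2, u3⟩
    have hPas : Nat.choose (T+1) (d+2) = Nat.choose T (d+1) + Nat.choose T (d+2) :=
      Nat.choose_succ_succ' T (d+1)
    set R := m + k - Nat.choose T (d+2) with hRdef
    have hR1 : 1 ≤ R := by omega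
    have hRw : R ≤ Nat.choose T (d+1) := by omega
    have hT2 : d + 2 ≤ T := by
      by_contra hcon
      push_neg at hcon
      have hc0 : Nat.choose T (d+2) = 0 := Nat.choose_eq_zero_of_lt (by omega)
      have : Nat.choose (T+1) (d+2) ≤ 1 := by
        have : T + 1 ≤ d + 2 := by omega
        rcases lt_or_eq_of_le this with h | h
        · rw [Nat.choose_eq_zero_of_lt h]; omega
        · rw [h, Nat.choose_self]
      omega
    have hGmk : G (d+2) (m+k) = Nat.choose (T+1) (d+2) + G (d+1) R := by
      have h := G_rep (d+1) T R hR1 hRw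
      rw [show m + k = Nat.choose T (d+2) + R from by omega]
      exact h
    set w := Nat.choose T (d+1) with hwdef
    by_cases hkw : w ≤ k
    · -- big k
      have hGk : G (d+1) w + (k - w) ≤ G (d+1) k := by
        have := G_add_le d w (k - w)
        rw [show w + (k - w) = k from by omega] at this
        exact this
      have hfull : G (d+1) w = Nat.choose (T+1) (d+1) := G_full (d+1) T (by omega)
      have hgm := G_gamma_mono d (show R ≤ w from hRw)
      have hPw := Nat.choose_succ_succ' T d
      omega
    · push_neg at hkw
      -- k < w
      by_cases hmc2 : Nat.choose T (d+2) < m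
      · -- m in the same top block: contradiction with k < w
        exfalso
        set rm := m - Nat.choose T (d+2) with hrmdef
        have hrm1 : 1 ≤ rm := by omega
        have hrmw : rm ≤ w := by omega
        have hGm : G (d+2) m = Nat.choose (T+1) (d+2) + G (d+1) rm := by
          have h := G_rep (d+1) T rm hrm1 hrmw
          rw [show m = Nat.choose T (d+2) + rm from by omega]
          exact h
        have := G_ge_self d rm
        omega
      · push_neg at hmc2
        -- m ≤ C(T,d+2);  k's representation sits at level T-1
        obtain ⟨T, rfl⟩ : ∃ S, T = S + 1 := ⟨T - 1, by omega⟩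
        have hPT : Nat.choose (T+1) (d+2) = Nat.choose T (d+1) + Nat.choose T (d+2) :=
          Nat.choose_succ_succ' T (d+1)
        have hPw : Nat.choose (T+1) (d+1) = Nat.choose T d + Nat.choose T (d+1) :=
          Nat.choose_succ_succ' T d
        -- goal reduces to: w + G (d+1) R ≤ R + G (d+1) k  (w = C(T+1,d+1))
        by_cases hm2 : m ≤ Nat.choose T (d+2)
        · -- ρ ≥ R case
          set rho := k - Nat.choose T (d+1) with hrhodef
          have hrho : Nat.choose T (d+1) + rho = k := by omega
          have hrhoR : R ≤ rho := by omega
          have hrho1 : 1 ≤ rho := by omega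
          have hrhow : rho ≤ Nat.choose T d := by omega
          have hGk : G (d+1) k = Nat.choose (T+1) (d+1) + G d rho := by
            have h := G_rep d T rho hrho1 hrhow
            rw [← hrho]
            exact h
          have hAR := ih 0 R (by rw [G_zero]; omega)
          rw [Nat.zero_add] at hAR
          have hmono := G_mono_all d hrhoR
          omega
        · push_neg at hm2
          set r' := m - Nat.choose T (d+2) with hr'def
          have hr'1 : 1 ≤ r' := by omega
          have hr'w : r' ≤ Nat.choose T (d+1) := by omega
          have hGm : G (d+2) m = Nat.choose (T+1) (d+2) + G (d+1) r' := by
            have h := G_rep (d+1) T r' hr'1 hr'w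
            rw [show m = Nat.choose T (d+2) + r' from by omega]
            exact h
          have hsucc := G_ge_succ d r' hr'1
          -- from hyp : k ≥ C(T,d+1) + (G (d+1) r' - r') ≥ C(T,d+1)+1
          set rho := k - Nat.choose T (d+1) with hrhodef
          have hrho1 : 1 ≤ rho := by omega
          have hrho : Nat.choose T (d+1) + rho = k := by omega
          have hrhow : rho ≤ Nat.choose T d := by omega
          have hGk : G (d+1) k = Nat.choose (T+1) (d+1) + G d rho := by
            have h := G_rep d T rho hrho1 hrhow
            rw [← hrho]
            exact h
          have hRrr : R = r' + rho := by omega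
          have hAR := ih r' rho (by omega)
          rw [← hRrr] at hAR
          omega

lemma G_lemB : ∀ d m k, m + k < G (d+1) m → G (d+1) (m+k) ≤ G (d+1) m + G d k := by
  intro d
  induction d with
  | zero =>
    intro m k hyp
    rcases Nat.eq_zero_or_pos m with rfl | hm
    · rw [G_zero] at hyp; omega
    rw [G_one m hm] at hyp
    have hk : k = 0 := by omega
    subst hk
    simp [Nat.add_zero, G_zero]
  | succ d ih =>
    intro m k hyp
    rcases Nat.eq_zero_or_pos m with rfl | hm
    · rw [G_zero] at hyp; omega
    show G (d+2) (m+k) ≤ G (d+2) m + G (d+1) k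
    have hyp2 : m + k < G (d+2) m := hyp
    clear hyp
    obtain ⟨T, h1, h2, h3⟩ : ∃ T, Nat.choose T (d+2) < m ∧
        m ≤ Nat.choose (T+1) (d+2) ∧ d + 1 ≤ T := by
      obtain ⟨u1, u2, u3⟩ := lvl_spec (d+1) m hm
      exact ⟨lvl (d+1) m, u1, u2, u3⟩
    have hPas : Nat.choose (T+1) (d+2) = Nat.choose T (d+1) + Nat.choose T (d+2) :=
      Nat.choose_succ_succ' T (d+1)
    set r := m - Nat.choose T (d+2) with hrdef
    have hr1 : 1 ≤ r := by omega
    set w := Nat.choose T (d+1) with hwdef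
    have hrw : r ≤ w := by omega
    have hGm : G (d+2) m = Nat.choose (T+1) (d+2) + G (d+1) r := by
      have h := G_rep (d+1) T r hr1 hrw
      rw [show m = Nat.choose T (d+2) + r from by omega]
      exact h
    by_cases hsame : r + k ≤ w
    · have hGmk : G (d+2) (m+k) = Nat.choose (T+1) (d+2) + G (d+1) (r+k) := by
        have h := G_rep (d+1) T (r+k) (by omega) hsame
        rw [show m + k = Nat.choose T (d+2) + (r+k) from by omega]
        exact h
      have hsub := G_subadd d r k
      omega
    · push_neg at hsame
      set z := r + k - w with hzdef
      have hz1 : 1 ≤ z := by omega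
      have hzG : z < G (d+1) r := by omega
      have hfullw : G (d+1) w = Nat.choose (T+1) (d+1) := G_full (d+1) T (by omega)
      have hzw1 : z ≤ Nat.choose (T+1) (d+1) := by
        have := G_mono d (show r ≤ w from hrw)
        omega
      have hGmk : G (d+2) (m+k) = Nat.choose (T+2) (d+2) + G (d+1) z := by
        have h := G_rep (d+1) (T+1) z hz1 hzw1
        rw [show m + k = Nat.choose (T+1) (d+2) + z from by omega]
        exact h
      have hP2 : Nat.choose (T+2) (d+2) = Nat.choose (T+1) (d+1) + Nat.choose (T+1) (d+2) :=
        Nat.choose_succ_succ' (T+1) (d+1)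
      by_cases hrz : r ≤ z
      · -- peel a full tail block : k = w + (z - r)
        set s := z - r with hsdef
        have hks : k = w + s := by omega
        have hgm := G_gamma_mono d (show r ≤ w from hrw)
        have hPw := Nat.choose_succ_succ' T d
        have hsw : s ≤ Nat.choose T d := by omega
        rcases Nat.eq_zero_or_pos s with hs0 | hs1
        · have hzr : z = r := by omega
          have hGk : G (d+1) k = Nat.choose (T+1) (d+1) := by
            rw [hks, hs0, Nat.add_zero]
            exact hfullw
          rw [hzr] at hGmk
          omega
        · have hGk : G (d+1) k = Nat.choose (T+1) (d+1) + G d s := by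
            have h := G_rep d T s hs1 hsw
            rw [hks]
            exact h
          have hB := ih r s (by omega)
          rw [show r + s = z from by omega] at hB
          omega
      · push_neg at hrz
        -- window at the inner level
        have hwin := G_window d (w - r) r z T (by omega) (by omega)
        rw [show r + (w - r) = w from by omega, show z + (w - r) = k from by omega] at hwin
        omega

lemma G_core (d m k : ℕ) : G (d+1) (m+k) ≤ max (G (d+1) m) (m+k) + G d k := by
  rcases le_or_gt (G (d+1) m) (m+k) with h | h
  · have := G_lemA d m k h
    omega
  · have := G_lemB d m k (by omega)
    omega

lemma G_profile (d : ℕ) : ∀ N (a : ℕ → ℕ), a 0 = 0 → (∀ n, N ≤ n → a n = 0) →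
    G (d+1) (∑ n ∈ Finset.range N, a n) ≤
      ∑ n ∈ Finset.range (N+1), max (a (n+1)) (G d (a n)) := by
  intro N
  induction N with
  | zero =>
    intro a h0 _
    simp [G_zero]
  | succ N ihN =>
    intro a h0 hsupp
    rcases Nat.eq_zero_or_pos N with rfl | hN
    · simp [h0, G_zero]
    obtain ⟨M, rfl⟩ : ∃ M, N = M + 1 := ⟨N - 1, by omega⟩
    set a' : ℕ → ℕ := Function.update a (M+1) 0 with ha'
    have ha'ne : ∀ n, n ≠ M+1 → a' n = a n := by
      intro n hn
      simp [ha', Function.update_of_ne hn]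
    have ha'eq : a' (M+1) = 0 := by simp [ha']
    have ha'0 : a' 0 = 0 := by rw [ha'ne 0 (by omega)]; exact h0
    have ha'supp : ∀ n, (M+1) ≤ n → a' n = 0 := by
      intro n hn
      rcases eq_or_lt_of_le hn with h | h
      · rw [← h]; exact ha'eq
      · rw [ha'ne n (by omega)]; exact hsupp n (by omega)
    have hIH := ihN a' ha'0 ha'supp
    -- sums of a' and a agree up to M+1
    have hm' : ∑ n ∈ Finset.range (M+1), a' n = ∑ n ∈ Finset.range (M+1), a n := by
      apply Finset.sum_congr rfl
      intro n hn
      rw [Finset.mem_range] at hn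
      exact ha'ne n (by omega)
    set m' := ∑ n ∈ Finset.range (M+1), a n with hm'def
    set k := a (M+1) with hkdef
    have htot : ∑ n ∈ Finset.range (M+2), a n = m' + k := by
      rw [Finset.sum_range_succ]
    set f : ℕ → ℕ := fun n => max (a (n+1)) (G d (a n)) with hf
    set f' : ℕ → ℕ := fun n => max (a' (n+1)) (G d (a' n)) with hf'
    have hfagree : ∀ n ∈ Finset.range M, f n = f' n := by
      intro n hn
      rw [Finset.mem_range] at hn
      simp only [hf, hf']
      rw [ha'ne (n+1) (by omega), ha'ne n (by omega)]
    -- decompose both sums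
    have hS' : ∑ n ∈ Finset.range (M+2), f' n
        = (∑ n ∈ Finset.range M, f' n) + G d (a M) + 0 := by
      rw [Finset.sum_range_succ, Finset.sum_range_succ]
      have h1 : f' (M+1) = 0 := by
        simp only [hf']
        rw [ha'supp (M+2) (by omega), ha'eq, G_zero]
        simp
      have h2 : f' M = G d (a M) := by
        simp only [hf']
        rw [ha'eq, ha'ne M (by omega)]
        simp
      rw [h1, h2]
    have hS : ∑ n ∈ Finset.range (M+3), f n
        = (∑ n ∈ Finset.range M, f n) + f M + G d k + 0 := by
      rw [Finset.sum_range_succ, Finset.sum_range_succ, Finset.sum_range_succ]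
      have h1 : f (M+2) = 0 := by
        simp only [hf]
        rw [hsupp (M+3) (by omega), hsupp (M+2) (by omega), G_zero]
        simp
      have h2 : f (M+1) = G d k := by
        simp only [hf]
        rw [hsupp (M+2) (by omega), hkdef]
        simp
      rw [h1, h2]
    have hAeq : ∑ n ∈ Finset.range M, f n = ∑ n ∈ Finset.range M, f' n :=
      Finset.sum_congr rfl hfagree
    -- lower bound : A ≥ m'
    have hA : m' ≤ ∑ n ∈ Finset.range M, f' n := by
      have hstep : ∑ n ∈ Finset.range M, a (n+1) ≤ ∑ n ∈ Finset.range M, f' n := by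
        apply Finset.sum_le_sum
        intro n hn
        rw [Finset.mem_range] at hn
        simp only [hf']
        rw [ha'ne (n+1) (by omega)]
        exact le_max_left _ _
      have hsum : ∑ n ∈ Finset.range (M+1), a n = ∑ n ∈ Finset.range M, a (n+1) + a 0 :=
        Finset.sum_range_succ' a M
      rw [hm'def, hsum, h0]
      omega
    have hfM : f M = max k (G d (a M)) := rfl
    have hCore := G_core d m' k
    have hIH2 : G (d+1) m' ≤ (∑ n ∈ Finset.range M, f' n) + G d (a M) := by
      rw [hm'] at hIH
      calc G (d+1) m' ≤ ∑ n ∈ Finset.range (M+2), f' n := hIH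
        _ = _ := by rw [hS']; omega
    rw [htot, hS, hAeq, hfM]
    omega

lemma G_profile' (d : ℕ) (N : ℕ) (a : ℕ → ℕ) (h0 : a 0 = 0) (hsupp : ∀ n, N ≤ n → a n = 0)
    (m : ℕ) (hm : m = ∑ n ∈ Finset.range N, a n) :
    G (d+1) m ≤ ∑ n ∈ Finset.range (N+1), max (a (n+1)) (G d (a n)) := by
  rw [hm]; exact G_profile d N a h0 hsupp

open Finset in
lemma sup_id_mem (s : Finset ℕ) (h : s.Nonempty) : s.sup id ∈ s := by
  have h1 : s.max' h ∈ s := Finset.max'_mem s h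
  have h2 : s.max' h = s.sup id := by
    rw [Finset.max']
    exact Finset.sup'_eq_sup h id
  rwa [h2] at h1

lemma le_sup_id {s : Finset ℕ} {x : ℕ} (h : x ∈ s) : x ≤ s.sup id := Finset.le_sup (f := id) h

lemma piShift_mono (i : ℕ) : Monotone (piShift i) := by
  intro a b h
  simp only [piShift]
  split_ifs <;> omega

lemma piShift_strictMono (i : ℕ) : StrictMono (piShift i) := by
  intro a b h
  simp only [piShift]
  split_ifs <;> omega

lemma piShift_le (i j : ℕ) : piShift i j ≤ j + 1 := by
  simp only [piShift]; split_ifs <;> omega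

lemma piShift_ge (i j : ℕ) : j ≤ piShift i j := by
  simp only [piShift]; split_ifs <;> omega

lemma piShift_mem_Inc1 (i : ℕ) : piShift i ∈ Inc1 :=
  ⟨piShift_strictMono i, piShift_le i⟩

lemma id_mem_Inc1 : (id : ℕ → ℕ) ∈ Inc1 := ⟨strictMono_id, fun j => Nat.le_succ j⟩

lemma inc1_ge {π : ℕ → ℕ} (hπ : π ∈ Inc1) : ∀ j, j ≤ π j := by
  intro j
  induction j with
  | zero => exact Nat.zero_le _
  | succ j ih =>
    have := hπ.1 (show j < j + 1 by omega)
    omega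

lemma inc1_classify {π : ℕ → ℕ} (hπ : π ∈ Inc1) : (∀ j, π j = j) ∨ ∃ i, π = piShift i := by
  by_cases hall : ∀ j, π j = j
  · exact Or.inl hall
  · right
    push_neg at hall
    have hge := inc1_ge hπ
    have hub := hπ.2
    set i := Nat.find hall with hidef
    have hi : π i ≠ i := Nat.find_spec hall
    have hi' : π i = i + 1 := by
      have := hub i; have := hge i; omega
    have hlt : ∀ j, j < i → π j = j := by
      intro j hj
      have := Nat.find_min hall hj
      simpa using this
    have hbig : ∀ j, i ≤ j → π j = j + 1 := by
      intro j hj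
      induction j, hj using Nat.le_induction with
      | base => exact hi'
      | succ j hj ih =>
        have h1 := hπ.1 (show j < j + 1 by omega)
        have h2 := hub (j+1)
        omega
    refine ⟨i, funext fun j => ?_⟩
    simp only [piShift]
    split_ifs with h
    · exact hlt j h
    · exact hbig j (by omega)

lemma sup_image_piShift (u : Finset ℕ) (h : u.Nonempty) (i : ℕ) :
    (u.image (piShift i)).sup id = piShift i (u.sup id) := by
  apply le_antisymm
  · apply Finset.sup_le
    intro b hb
    rw [Finset.mem_image] at hb
    obtain ⟨x, hx, rfl⟩ := hb
    exact piShift_mono i (le_sup_id hx)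
  · exact le_sup_id (Finset.mem_image_of_mem _ (sup_id_mem u h))

def incOf (u : Finset ℕ) : Finset (Finset ℕ) :=
  insert u ((Finset.range (u.sup id + 2)).image (fun i => u.image (piShift i)))

def incFin (A : Finset (Finset ℕ)) : Finset (Finset ℕ) := A.biUnion incOf

lemma image_piShift_of_big {u : Finset ℕ} {i : ℕ} (h : u.sup id < i) :
    u.image (piShift i) = u := by
  have heq : ∀ x ∈ u, piShift i x = id x := by
    intro x hx
    have := le_sup_id hx
    simp only [piShift, id]
    split_ifs with hh
    · rfl
    · omega
  rw [Finset.image_congr heq, Finset.image_id]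

lemma mem_incOf_of_piShift (u : Finset ℕ) (i : ℕ) : u.image (piShift i) ∈ incOf u := by
  by_cases h : i < u.sup id + 2
  · exact Finset.mem_insert_of_mem
      (Finset.mem_image.mpr ⟨i, Finset.mem_range.mpr h, rfl⟩)
  · push_neg at h
    rw [image_piShift_of_big (show u.sup id < i by omega)]
    exact Finset.mem_insert_self _ _

lemma self_mem_incOf (u : Finset ℕ) : u ∈ incOf u := Finset.mem_insert_self _ _

lemma mem_incOf_elim {u v : Finset ℕ} (h : v ∈ incOf u) :
    v = u ∨ ∃ i, v = u.image (piShift i) := by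
  rcases Finset.mem_insert.mp h with h | h
  · exact Or.inl h
  · rw [Finset.mem_image] at h
    obtain ⟨i, _, rfl⟩ := h
    exact Or.inr ⟨i, rfl⟩

lemma incF_coe (A : Finset (Finset ℕ)) : incF (↑A : Set (Finset ℕ)) = ↑(incFin A) := by
  ext v
  constructor
  · rintro ⟨u, hu, π, hπ, rfl⟩
    rw [Finset.mem_coe] at hu
    rw [Finset.mem_coe, incFin, Finset.mem_biUnion]
    refine ⟨u, hu, ?_⟩
    rcases inc1_classify hπ with hid | ⟨i, rfl⟩
    · have himg : u.image π = u := by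
        have heq : ∀ x ∈ u, π x = id x := fun x _ => hid x
        rw [Finset.image_congr heq, Finset.image_id]
      rw [himg]; exact self_mem_incOf u
    · exact mem_incOf_of_piShift u i
  · intro hv
    rw [Finset.mem_coe, incFin, Finset.mem_biUnion] at hv
    obtain ⟨u, hu, hvOf⟩ := hv
    rcases mem_incOf_elim hvOf with rfl | ⟨i, rfl⟩
    · exact ⟨v, hu, id, id_mem_Inc1, (Finset.image_id).symm⟩
    · exact ⟨u, hu, piShift i, piShift_mem_Inc1 i, rfl⟩

lemma card_of_mem_incOf {u v : Finset ℕ} (h : v ∈ incOf u) : v.card = u.card := by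
  rcases mem_incOf_elim h with rfl | ⟨i, rfl⟩
  · rfl
  · exact Finset.card_image_of_injective u (piShift_strictMono i).injective

lemma sup_of_mem_incOf {u v : Finset ℕ} (hu : u.Nonempty) (h : v ∈ incOf u) :
    v.sup id = u.sup id ∨ v.sup id = u.sup id + 1 := by
  rcases mem_incOf_elim h with rfl | ⟨i, rfl⟩
  · exact Or.inl rfl
  · rw [sup_image_piShift u hu i]
    have h1 := piShift_le i (u.sup id)
    have h2 := piShift_ge i (u.sup id)
    omega

def layer (A : Finset (Finset ℕ)) (n : ℕ) : Finset (Finset ℕ) :=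
  A.filter (fun u => u.sup id = n)

def TT (B : Finset (Finset ℕ)) : Finset (Finset ℕ) :=
  B.biUnion (fun u => (Finset.range (u.sup id + 1)).image (fun i => u.image (piShift i)))

def tilde (B : Finset (Finset ℕ)) (n : ℕ) : Finset (Finset ℕ) :=
  B.image (fun u => u.erase n)

lemma mem_layer {A : Finset (Finset ℕ)} {n : ℕ} {u : Finset ℕ} :
    u ∈ layer A n ↔ u ∈ A ∧ u.sup id = n := Finset.mem_filter

lemma subset_incFin (A : Finset (Finset ℕ)) : A ⊆ incFin A := by
  intro u hu
  rw [incFin, Finset.mem_biUnion]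
  exact ⟨u, hu, self_mem_incOf u⟩

lemma sup_incOf_le {u v : Finset ℕ} (h : v ∈ incOf u) : v.sup id ≤ u.sup id + 1 := by
  rcases mem_incOf_elim h with rfl | ⟨i, rfl⟩
  · omega
  · apply Finset.sup_le
    intro b hb
    rw [Finset.mem_image] at hb
    obtain ⟨x, hx, rfl⟩ := hb
    have h1 := piShift_le i x
    have h2 := le_sup_id hx
    simp only [id]
    omega

lemma mem_of_sup_mem {v : Finset ℕ} {x : ℕ} (hx : x ∈ v) : x ≤ v.sup id := le_sup_id hx

/-- erase the top element: bijection on a layer -/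
lemma card_tilde {B : Finset (Finset ℕ)} {n : ℕ}
    (hB : ∀ u ∈ B, u.sup id = n ∧ u.Nonempty) :
    (tilde B n).card = B.card := by
  rw [tilde]
  apply Finset.card_image_of_injOn
  intro u1 h1 u2 h2 heq
  have hn1 : n ∈ u1 := by
    obtain ⟨hs, hne⟩ := hB u1 h1
    rw [← hs]; exact sup_id_mem u1 hne
  have hn2 : n ∈ u2 := by
    obtain ⟨hs, hne⟩ := hB u2 h2
    rw [← hs]; exact sup_id_mem u2 hne
  have := congrArg (insert n) heq
  rwa [Finset.insert_erase hn1, Finset.insert_erase hn2] at this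

lemma tilde_card_elts {B : Finset (Finset ℕ)} {n d : ℕ}
    (hB : ∀ u ∈ B, u.sup id = n ∧ u.Nonempty) (hcards : ∀ u ∈ B, u.card = d + 1) :
    ∀ w ∈ tilde B n, w.card = d := by
  intro w hw
  rw [tilde, Finset.mem_image] at hw
  obtain ⟨u, hu, rfl⟩ := hw
  have hn : n ∈ u := by
    obtain ⟨hs, hne⟩ := hB u hu
    rw [← hs]; exact sup_id_mem u hne
  rw [Finset.card_erase_of_mem hn, hcards u hu]
  omega

lemma tilde_elts_lt {B : Finset (Finset ℕ)} {n : ℕ}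
    (hB : ∀ u ∈ B, u.sup id = n ∧ u.Nonempty) :
    ∀ w ∈ tilde B n, ∀ x ∈ w, x < n := by
  intro w hw x hx
  rw [tilde, Finset.mem_image] at hw
  obtain ⟨u, hu, rfl⟩ := hw
  rw [Finset.mem_erase] at hx
  have := le_sup_id hx.2
  have := (hB u hu).1
  omega

lemma incFin_tilde_elts_le {B : Finset (Finset ℕ)} {n : ℕ}
    (hB : ∀ u ∈ B, u.sup id = n ∧ u.Nonempty) :
    ∀ w ∈ incFin (tilde B n), ∀ x ∈ w, x ≤ n := by
  intro w hw x hx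
  rw [incFin, Finset.mem_biUnion] at hw
  obtain ⟨t, ht, hw⟩ := hw
  have hsup : w.sup id ≤ t.sup id + 1 := sup_incOf_le hw
  have htlt : ∀ y ∈ t, y < n := tilde_elts_lt hB t ht
  have hxle := le_sup_id hx
  rcases t.eq_empty_or_nonempty with rfl | htne
  · rcases mem_incOf_elim hw with rfl | ⟨i, rfl⟩
    · simp at hx
    · simp at hx
  · have : t.sup id < n := htlt _ (sup_id_mem t htne)
    omega

lemma TT_eq {B : Finset (Finset ℕ)} {n : ℕ}
    (hB : ∀ u ∈ B, u.sup id = n ∧ u.Nonempty) :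
    TT B = (incFin (tilde B n)).image (fun w => insert (n+1) w) := by
  ext v
  constructor
  · intro hv
    rw [TT, Finset.mem_biUnion] at hv
    obtain ⟨u, hu, hv⟩ := hv
    rw [Finset.mem_image] at hv
    obtain ⟨i, hi, rfl⟩ := hv
    rw [Finset.mem_range, (hB u hu).1] at hi
    have hn : n ∈ u := by
      obtain ⟨hs, hne⟩ := hB u hu
      rw [← hs]; exact sup_id_mem u hne
    have hins : u = insert n (u.erase n) := (Finset.insert_erase hn).symm
    rw [Finset.mem_image]
    refine ⟨(u.erase n).image (piShift i), ?_, ?_⟩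
    · rw [incFin, Finset.mem_biUnion]
      exact ⟨u.erase n, Finset.mem_image_of_mem _ hu, mem_incOf_of_piShift _ i⟩
    · conv_rhs => rw [← Finset.insert_erase hn]
      rw [Finset.image_insert]
      congr 1
      simp only [piShift]
      split_ifs with h
      · omega
      · rfl
  · intro hv
    rw [Finset.mem_image] at hv
    obtain ⟨w, hw, rfl⟩ := hv
    rw [incFin, Finset.mem_biUnion] at hw
    obtain ⟨t, ht, hw⟩ := hw
    obtain ⟨u, hu, hteq⟩ := Finset.mem_image.mp ht
    have hn : n ∈ u := by
      obtain ⟨hs, hne⟩ := hB u hu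
      rw [← hs]; exact sup_id_mem u hne
    have htlt : ∀ y ∈ t, y < n := tilde_elts_lt hB t ht
    have htsup : t.sup id < n ∨ t = ∅ := by
      rcases t.eq_empty_or_nonempty with rfl | htne
      · exact Or.inr rfl
      · exact Or.inl (htlt _ (sup_id_mem t htne))
    -- key: for i ≤ n,  u.image (piShift i) = insert (n+1) (t.image (piShift i))
    have hkey : ∀ i, i ≤ n → u.image (piShift i) = insert (n+1) (t.image (piShift i)) := by
      intro i hi
      conv_lhs => rw [(Finset.insert_erase hn).symm, hteq]
      rw [Finset.image_insert]
      congr 1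
      simp only [piShift]
      split_ifs with h
      · omega
      · rfl
    have hTTmem : ∀ i, i ≤ n → u.image (piShift i) ∈ TT B := by
      intro i hi
      rw [TT, Finset.mem_biUnion]
      refine ⟨u, hu, Finset.mem_image.mpr ⟨i, ?_, rfl⟩⟩
      rw [Finset.mem_range, (hB u hu).1]
      omega
    have htid : ∀ i, n ≤ i → t.image (piShift i) = t := by
      intro i hi
      rcases htsup with hs | rfl
      · exact image_piShift_of_big (by omega)
      · simp
    rcases mem_incOf_elim hw with rfl | ⟨i, rfl⟩
    · -- w = t : use i = n
      have := hTTmem n le_rfl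
      rwa [hkey n le_rfl, htid n le_rfl] at this
    · by_cases hi : i ≤ n
      · have := hTTmem i hi
        rwa [hkey i hi] at this
      · push_neg at hi
        rw [htid i (by omega)]
        have := hTTmem n le_rfl
        rwa [hkey n le_rfl, htid n le_rfl] at this

lemma card_TT {B : Finset (Finset ℕ)} {n : ℕ}
    (hB : ∀ u ∈ B, u.sup id = n ∧ u.Nonempty) :
    (TT B).card = (incFin (tilde B n)).card := by
  rw [TT_eq hB]
  apply Finset.card_image_of_injOn
  intro w1 h1 w2 h2 heq
  have hn1 : (n+1) ∉ w1 := by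
    intro hmem
    have := incFin_tilde_elts_le hB w1 h1 (n+1) hmem
    omega
  have hn2 : (n+1) ∉ w2 := by
    intro hmem
    have := incFin_tilde_elts_le hB w2 h2 (n+1) hmem
    omega
  have := congrArg (fun s => Finset.erase s (n+1)) heq
  simpa [Finset.erase_insert hn1, Finset.erase_insert hn2] using this

lemma TT_subset_layer {A : Finset (Finset ℕ)} {n : ℕ}
    (hA : ∀ u ∈ A, u.Nonempty) :
    TT (layer A n) ⊆ layer (incFin A) (n+1) := by
  intro v hv
  rw [TT, Finset.mem_biUnion] at hv
  obtain ⟨u, hu, hv⟩ := hv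
  rw [Finset.mem_image] at hv
  obtain ⟨i, hi, rfl⟩ := hv
  rw [mem_layer] at hu
  rw [Finset.mem_range, hu.2] at hi
  rw [mem_layer]
  constructor
  · rw [incFin, Finset.mem_biUnion]
    exact ⟨u, hu.1, mem_incOf_of_piShift u i⟩
  · rw [sup_image_piShift u (hA u hu.1) i, hu.2]
    simp only [piShift]
    split_ifs with h
    · omega
    · rfl

lemma layer_subset_layer {A : Finset (Finset ℕ)} {n : ℕ} :
    layer A n ⊆ layer (incFin A) n := by
  intro u hu
  rw [mem_layer] at hu ⊢
  exact ⟨subset_incFin A hu.1, hu.2⟩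

theorem incFin_card_lower : ∀ d (A : Finset (Finset ℕ)), (∀ u ∈ A, u.card = d) →
    G d A.card ≤ (incFin A).card := by
  intro d
  induction d with
  | zero =>
    intro A _
    rcases A.eq_empty_or_nonempty with rfl | hne
    · simp [incFin, G_zero]
    · have h1 : 1 ≤ A.card := Finset.card_pos.mpr hne
      have h2 : 1 ≤ (incFin A).card := by
        apply Finset.card_pos.mpr
        obtain ⟨u, hu⟩ := hne
        exact ⟨u, subset_incFin A hu⟩
      have : G 0 A.card ≤ 1 := by simp [G]
      omega
  | succ d ih =>
    intro A hcards
    have hne' : ∀ u ∈ A, u.Nonempty := by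
      intro u hu
      apply Finset.card_pos.mp
      rw [hcards u hu]
      omega
    set N := A.sup (fun u => u.sup id) + 1 with hN
    have hsupN : ∀ u ∈ A, u.sup id < N := by
      intro u hu
      have h1 : u.sup id ≤ A.sup (fun v => v.sup id) := Finset.le_sup hu
      omega
    set a : ℕ → ℕ := fun n => if n = 0 then 0 else (layer A (n-1)).card with ha
    have ha0 : a 0 = 0 := by simp [ha]
    have haS : ∀ k, a (k+1) = (layer A k).card := by
      intro k; simp [ha]
    have hasupp : ∀ n, (N+1) ≤ n → a n = 0 := by
      intro n hn
      have h1 : layer A (n-1) = ∅ := by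
        rw [layer, Finset.filter_eq_empty_iff]
        intro u hu
        have := hsupN u hu
        omega
      have hn0 : n ≠ 0 := by omega
      simp [ha, hn0, h1]
    have hsum : A.card = ∑ n ∈ Finset.range (N+1), a n := by
      rw [Finset.sum_range_succ' a N, ha0, Nat.add_zero]
      have : ∀ k ∈ Finset.range N, a (k+1) = (layer A k).card := fun k _ => haS k
      rw [Finset.sum_congr rfl this]
      exact Finset.card_eq_sum_card_fiberwise (fun u hu => Finset.mem_range.mpr (hsupN u hu))
    have hmain := G_profile' d (N+1) a ha0 hasupp A.card hsum
    -- now bound the RHS by (incFin A).card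
    have hperterm : ∀ n ∈ Finset.range (N+2),
        max (a (n+1)) (G d (a n)) ≤ (layer (incFin A) n).card := by
      intro n _
      have h1 : a (n+1) ≤ (layer (incFin A) n).card := by
        rw [haS n]
        exact Finset.card_le_card layer_subset_layer
      have h2 : G d (a n) ≤ (layer (incFin A) n).card := by
        rcases Nat.eq_zero_or_pos n with rfl | hn
        · rw [ha0, G_zero]; omega
        obtain ⟨k, rfl⟩ : ∃ k, n = k + 1 := ⟨n - 1, by omega⟩
        rw [haS k]
        have hBfact : ∀ u ∈ layer A k, u.sup id = k ∧ u.Nonempty := by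
          intro u hu
          rw [mem_layer] at hu
          exact ⟨hu.2, hne' u hu.1⟩
        have hc1 : (layer A k).card = (tilde (layer A k) k).card := (card_tilde hBfact).symm
        have hc2 := ih (tilde (layer A k) k)
          (tilde_card_elts hBfact (fun u hu => hcards u (mem_layer.mp hu).1))
        have hc3 : (incFin (tilde (layer A k) k)).card = (TT (layer A k)).card :=
          (card_TT hBfact).symm
        have hc4 : (TT (layer A k)).card ≤ (layer (incFin A) (k+1)).card :=
          Finset.card_le_card (TT_subset_layer hne')
        rw [hc1]
        omega
      omega
    have hfib : (incFin A).card = ∑ n ∈ Finset.range (N+2), (layer (incFin A) n).card := by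
      apply Finset.card_eq_sum_card_fiberwise
      intro v (hv : v ∈ incFin A)
      show v.sup id ∈ Finset.range _
      rw [incFin, Finset.mem_biUnion] at hv
      obtain ⟨u, hu, hv⟩ := hv
      have := sup_incOf_le hv
      have := hsupN u hu
      rw [Finset.mem_range]
      omega
    calc G (d+1) A.card ≤ ∑ n ∈ Finset.range (N+2), max (a (n+1)) (G d (a n)) := hmain
      _ ≤ ∑ n ∈ Finset.range (N+2), (layer (incFin A) n).card :=
          Finset.sum_le_sum hperterm
      _ = (incFin A).card := hfib.symm

lemma colex_le_of_sup_lt {u v : Finset ℕ} (hu : u.Nonempty) (h : v.sup id < u.sup id) :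
    toColex v ≤ toColex u := by
  apply le_of_lt
  rw [Finset.Colex.toColex_lt_toColex_iff_exists_forall_lt]
  refine ⟨u.sup id, sup_id_mem u hu, ?_, ?_⟩
  · intro hmem
    have := le_sup_id hmem
    omega
  · intro b hb _
    have := le_sup_id hb
    omega

lemma colex_insert_le_insert {n : ℕ} {s t : Finset ℕ} (hs : n ∉ s) (ht : n ∉ t)
    (h : toColex s ≤ toColex t) :
    toColex (insert n s) ≤ toColex (insert n t) := by
  have hsub1 : ({n} : Finset ℕ) ⊆ insert n s := by simp
  have hsub2 : ({n} : Finset ℕ) ⊆ insert n t := by simp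
  have hiff := Finset.Colex.toColex_sdiff_le_toColex_sdiff hsub1 hsub2
  apply hiff.mp
  have e1 : insert n s \ {n} = s := by
    rw [Finset.sdiff_singleton_eq_erase, Finset.erase_insert hs]
  have e2 : insert n t \ {n} = t := by
    rw [Finset.sdiff_singleton_eq_erase, Finset.erase_insert ht]
  rw [e1, e2]
  exact h

lemma colex_le_elts {u v : Finset ℕ} (h : toColex v ≤ toColex u) :
    ∀ b ∈ v, b ≤ u.sup id :=
  Finset.Colex.forall_le_mono h (fun b hb => le_sup_id hb)

def fullLayer (d n : ℕ) : Finset (Finset ℕ) :=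
  ((Finset.range n).powersetCard d).image (fun w => insert n w)

lemma mem_fullLayer_iff {d n : ℕ} {u : Finset ℕ} :
    u ∈ fullLayer d n ↔ u.card = d + 1 ∧ u.sup id = n := by
  constructor
  · intro h
    rw [fullLayer, Finset.mem_image] at h
    obtain ⟨w, hw, rfl⟩ := h
    rw [Finset.mem_powersetCard] at hw
    have hnw : n ∉ w := by
      intro hmem
      have := hw.1 hmem
      rw [Finset.mem_range] at this
      omega
    constructor
    · rw [Finset.card_insert_of_notMem hnw, hw.2]
    · rw [Finset.sup_insert]
      have : w.sup id ≤ n := by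
        apply Finset.sup_le
        intro b hb
        have := hw.1 hb
        rw [Finset.mem_range] at this
        simp only [id]
        omega
      simp only [id]
      omega
  · rintro ⟨hcard, hsup⟩
    have hne : u.Nonempty := Finset.card_pos.mp (by omega)
    have hn : n ∈ u := by rw [← hsup]; exact sup_id_mem u hne
    rw [fullLayer, Finset.mem_image]
    refine ⟨u.erase n, ?_, Finset.insert_erase hn⟩
    rw [Finset.mem_powersetCard]
    constructor
    · intro x hx
      rw [Finset.mem_erase] at hx
      rw [Finset.mem_range]
      have := le_sup_id hx.2
      omega
    · rw [Finset.card_erase_of_mem hn, hcard]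
      omega

lemma card_fullLayer (d n : ℕ) : (fullLayer d n).card = Nat.choose n d := by
  rw [fullLayer]
  rw [Finset.card_image_of_injOn]
  · rw [Finset.card_powersetCard, Finset.card_range]
  · intro w1 h1 w2 h2 heq
    rw [Finset.mem_coe, Finset.mem_powersetCard] at h1 h2
    have hn1 : n ∉ w1 := fun hm => by have := h1.1 hm; rw [Finset.mem_range] at this; omega
    have hn2 : n ∉ w2 := fun hm => by have := h2.1 hm; rw [Finset.mem_range] at this; omega
    have := congrArg (fun s => Finset.erase s n) heq
    simpa [Finset.erase_insert hn1, Finset.erase_insert hn2] using this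

lemma hockey_range (d t : ℕ) (h : d ≤ t) :
    ∑ n ∈ Finset.range t, Nat.choose n d = Nat.choose t (d+1) := by
  rcases Nat.eq_zero_or_pos t with rfl | ht
  · simp
  have hsub : Finset.Icc d (t-1) ⊆ Finset.range t := by
    intro x hx
    rw [Finset.mem_Icc] at hx
    rw [Finset.mem_range]
    omega
  have hzero : ∀ x ∈ Finset.range t, x ∉ Finset.Icc d (t-1) → Nat.choose x d = 0 := by
    intro x hx hnx
    rw [Finset.mem_range] at hx
    rw [Finset.mem_Icc] at hnx
    apply Nat.choose_eq_zero_of_lt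
    omega
  rw [← Finset.sum_subset hsub hzero]
  have := Nat.sum_Icc_choose (t-1) d
  rw [this]
  congr 1
  omega

theorem incFin_card_upper : ∀ d (A : Finset (Finset ℕ)), (∀ u ∈ A, u.card = d + 1) →
    (∀ u ∈ A, ∀ v : Finset ℕ, v.card = d + 1 →
      toColex v ≤ toColex u → v ∈ A) →
    (incFin A).card ≤ G (d+1) A.card := by
  intro d
  induction d with
  | zero =>
    intro A hcards hcomp
    rcases A.eq_empty_or_nonempty with rfl | hne
    · simp [incFin, G_zero]
    set m := A.card with hm
    have hm1 : 1 ≤ m := Finset.card_pos.mpr hne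
    have hxlt : ∀ x : ℕ, ({x} : Finset ℕ) ∈ A → x < m := by
      intro x hx
      have hsubs : (Finset.range (x+1)).image (fun j => ({j} : Finset ℕ)) ⊆ A := by
        intro v hv
        rw [Finset.mem_image] at hv
        obtain ⟨j, hj, rfl⟩ := hv
        rw [Finset.mem_range] at hj
        apply hcomp _ hx _ (Finset.card_singleton j)
        rw [Finset.Colex.singleton_le_singleton]
        omega
      have hcard := Finset.card_le_card hsubs
      rw [Finset.card_image_of_injective _ Finset.singleton_injective,
        Finset.card_range] at hcard
      omega
    have hsub : incFin A ⊆ (Finset.range (m+1)).image (fun j => ({j} : Finset ℕ)) := by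
      intro v hv
      rw [incFin, Finset.mem_biUnion] at hv
      obtain ⟨u, hu, hvOf⟩ := hv
      obtain ⟨x, rfl⟩ := Finset.card_eq_one.mp (hcards u hu)
      have hxm := hxlt x hu
      rcases mem_incOf_elim hvOf with rfl | ⟨i, rfl⟩
      · exact Finset.mem_image.mpr ⟨x, Finset.mem_range.mpr (by omega), rfl⟩
      · rw [Finset.image_singleton]
        refine Finset.mem_image.mpr ⟨piShift i x, Finset.mem_range.mpr ?_, rfl⟩
        have := piShift_le i x
        omega
    have hcard := Finset.card_le_card hsub
    rw [G_one m hm1]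
    calc (incFin A).card ≤ ((Finset.range (m+1)).image (fun j => ({j} : Finset ℕ))).card := hcard
      _ ≤ (Finset.range (m+1)).card := Finset.card_image_le
      _ = m + 1 := Finset.card_range _
  | succ d ih =>
    intro A hcards hcomp
    rcases A.eq_empty_or_nonempty with rfl | hne
    · simp [incFin, G_zero]
    have hne' : ∀ u ∈ A, u.Nonempty := by
      intro u hu
      apply Finset.card_pos.mp
      rw [hcards u hu]
      omega
    set t := A.sup (fun u => u.sup id) with ht
    obtain ⟨u0, hu0, hu0t⟩ := Finset.exists_mem_eq_sup A hne (fun u => u.sup id)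
    have hsuple : ∀ u ∈ A, u.sup id ≤ t := by
      intro u hu
      have h1 : u.sup id ≤ A.sup (fun v => v.sup id) := Finset.le_sup hu
      omega
    have hu0sup : u0.sup id = t := hu0t.symm
    -- t ≥ d+1
    have htd : d + 1 ≤ t := by
      have hc := hcards u0 hu0
      have : u0.card ≤ u0.sup id + 1 := by
        have hsubr : u0 ⊆ Finset.range (u0.sup id + 1) := by
          intro x hx
          rw [Finset.mem_range]
          have := le_sup_id hx
          omega
        have := Finset.card_le_card hsubr
        rw [Finset.card_range] at this
        exact this
      omega
    -- layers below t are full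
    have hfull : ∀ n, n < t → layer A n = fullLayer (d+1) n := by
      intro n hn
      ext w
      rw [mem_layer, mem_fullLayer_iff]
      constructor
      · rintro ⟨hw, hsup⟩
        exact ⟨hcards w hw, hsup⟩
      · rintro ⟨hwc, hsup⟩
        refine ⟨?_, hsup⟩
        apply hcomp u0 hu0 w hwc
        apply colex_le_of_sup_lt (hne' u0 hu0)
        omega
    -- top layer
    set r := (layer A t).card with hr
    have hr1 : 1 ≤ r := by
      apply Finset.card_pos.mpr
      exact ⟨u0, mem_layer.mpr ⟨hu0, hu0sup⟩⟩
    have hrle : r ≤ Nat.choose t (d+1) := by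
      have hsubf : layer A t ⊆ fullLayer (d+1) t := by
        intro w hw
        rw [mem_layer] at hw
        rw [mem_fullLayer_iff]
        exact ⟨hcards w hw.1, hw.2⟩
      have := Finset.card_le_card hsubf
      rw [card_fullLayer] at this
      omega
    -- total count
    have hmcount : A.card = Nat.choose t (d+2) + r := by
      have hfib : A.card = ∑ n ∈ Finset.range (t+1), (layer A n).card :=
        Finset.card_eq_sum_card_fiberwise (fun u hu => Finset.mem_range.mpr (by
          have := hsuple u hu; omega))
      rw [hfib, Finset.sum_range_succ]
      have hterms : ∀ n ∈ Finset.range t, (layer A n).card = Nat.choose n (d+1) := by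
        intro n hn
        rw [Finset.mem_range] at hn
        rw [hfull n hn, card_fullLayer]
      rw [Finset.sum_congr rfl hterms, hockey_range (d+1) t (by omega)]
    -- the top tilde family is compressed
    set B := tilde (layer A t) t with hB
    have hBfact : ∀ u ∈ layer A t, u.sup id = t ∧ u.Nonempty := by
      intro u hu
      rw [mem_layer] at hu
      exact ⟨hu.2, hne' u hu.1⟩
    have hBcards : ∀ w ∈ B, w.card = d + 1 :=
      tilde_card_elts hBfact (fun u hu => hcards u (mem_layer.mp hu).1)
    have hBcomp : ∀ u ∈ B, ∀ v : Finset ℕ, v.card = d + 1 →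
        toColex v ≤ toColex u → v ∈ B := by
      intro w hw v hvc hvle
      have hwlt := tilde_elts_lt hBfact w hw
      obtain ⟨u, hu, hueq⟩ := Finset.mem_image.mp hw
      have hwne : w.Nonempty := Finset.card_pos.mp (by rw [hBcards w hw]; omega)
      have hwsup : w.sup id < t := hwlt _ (sup_id_mem w hwne)
      have hvlt : ∀ b ∈ v, b < t := by
        intro b hb
        have := colex_le_elts hvle b hb
        omega
      have htv : t ∉ v := fun hmem => by have := hvlt t hmem; omega
      have htw : t ∉ w := fun hmem => by have := hwlt t hmem; omega
      have htu : t ∈ u := by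
        obtain ⟨hs, hnu⟩ := hBfact u hu
        rw [← hs]; exact sup_id_mem u hnu
      have hlift : toColex (insert t v) ≤ toColex u := by
        have h1 := colex_insert_le_insert htv htw hvle
        rwa [show insert t w = u from by rw [← hueq]; exact Finset.insert_erase htu] at h1
      have hmem : insert t v ∈ A := by
        apply hcomp u (mem_layer.mp hu).1 _ ?_ hlift
        rw [Finset.card_insert_of_notMem htv, hvc]
      have hsupv : (insert t v).sup id = t := by
        rw [Finset.sup_insert]
        have : v.sup id ≤ t := by
          apply Finset.sup_le
          intro b hb
          have := hvlt b hb
          simp only [id]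
          omega
        simp only [id]
        omega
      rw [hB, tilde, Finset.mem_image]
      refine ⟨insert t v, mem_layer.mpr ⟨hmem, hsupv⟩, ?_⟩
      rw [Finset.erase_insert htv]
    have hIH := ih B hBcards hBcomp
    have hBcard : B.card = r := card_tilde hBfact
    rw [hBcard] at hIH
    -- layers of incFin A
    have hlayup : ∀ n, n ≤ t → (layer (incFin A) n).card ≤ Nat.choose n (d+1) := by
      intro n _
      have hsubf : layer (incFin A) n ⊆ fullLayer (d+1) n := by
        intro w hw
        rw [mem_layer] at hw
        rw [mem_fullLayer_iff]
        obtain ⟨u, hu, hwOf⟩ := Finset.mem_biUnion.mp hw.1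
        refine ⟨?_, hw.2⟩
        rw [card_of_mem_incOf hwOf, hcards u hu]
      have := Finset.card_le_card hsubf
      rw [card_fullLayer] at this
      exact this
    have hlaytop : layer (incFin A) (t+1) ⊆ TT (layer A t) := by
      intro v hv
      rw [mem_layer] at hv
      obtain ⟨u, hu, hvOf⟩ := Finset.mem_biUnion.mp hv.1
      have hus := hsuple u hu
      have hune := hne' u hu
      rcases mem_incOf_elim hvOf with rfl | ⟨i, rfl⟩
      · exfalso; have := hv.2; omega
      · rw [sup_image_piShift u hune i] at hv
        have hpis := piShift_le i (u.sup id)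
        have hpig := piShift_ge i (u.sup id)
        have husup : u.sup id = t := by have := hv.2; omega
        have hit : i ≤ t := by
          by_contra hcon
          push_neg at hcon
          have : piShift i (u.sup id) = u.sup id := by
            simp only [piShift]
            rw [if_pos]
            omega
          have := hv.2
          omega
        rw [TT, Finset.mem_biUnion]
        refine ⟨u, mem_layer.mpr ⟨hu, husup⟩, ?_⟩
        apply Finset.mem_image.mpr ⟨i, ?_, rfl⟩
        rw [Finset.mem_range, husup]
        omega
    have hlaytopcard : (layer (incFin A) (t+1)).card ≤ G (d+1) r := by
      have h1 := Finset.card_le_card hlaytop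
      have h2 := card_TT hBfact
      rw [← hB] at h2
      omega
    -- assemble
    have hfib2 : (incFin A).card = ∑ n ∈ Finset.range (t+2), (layer (incFin A) n).card := by
      apply Finset.card_eq_sum_card_fiberwise
      intro v hv
      obtain ⟨u, hu, hvOf⟩ := Finset.mem_biUnion.mp hv
      have := sup_incOf_le hvOf
      have := hsuple u hu
      show v.sup id ∈ Finset.range _
      rw [Finset.mem_range]
      omega
    have hbound : ∑ n ∈ Finset.range (t+2), (layer (incFin A) n).card
        ≤ Nat.choose (t+1) (d+2) + G (d+1) r := by
      rw [Finset.sum_range_succ]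
      have hmajor : ∑ n ∈ Finset.range (t+1), (layer (incFin A) n).card
          ≤ Nat.choose (t+1) (d+2) := by
        calc ∑ n ∈ Finset.range (t+1), (layer (incFin A) n).card
            ≤ ∑ n ∈ Finset.range (t+1), Nat.choose n (d+1) := by
              apply Finset.sum_le_sum
              intro n hn
              rw [Finset.mem_range] at hn
              exact hlayup n (by omega)
          _ = Nat.choose (t+1) (d+2) := hockey_range (d+1) (t+1) (by omega)
      omega
    have hGval : G (d+2) A.card = Nat.choose (t+1) (d+2) + G (d+1) r := by
      rw [hmcount]
      exact G_rep (d+1) t r hr1 hrle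
    show (incFin A).card ≤ G (d+2) A.card
    omega
end IncKK
theorem stmt0 (d : ℕ) (hd : 1 ≤ d) (F F' : Set (Finset ℕ))
    (hFfin : F.Finite) (hFd : ∀ u ∈ F, u.card = d)
    (hcomp : IsCompressedIn Set.univ d F)
    (hF'fin : F'.Finite) (hF'd : ∀ u ∈ F', u.card = d)
    (hcard : F'.ncard = F.ncard) :
    (incF F).ncard ≤ (incF F').ncard := by
  classical
  obtain ⟨e, rfl⟩ : ∃ e, d = e + 1 := ⟨d - 1, by omega⟩
  set A := hFfin.toFinset with hA
  set A' := hF'fin.toFinset with hA'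
  have hcoeA : (↑A : Set (Finset ℕ)) = F := hFfin.coe_toFinset
  have hcoeA' : (↑A' : Set (Finset ℕ)) = F' := hF'fin.coe_toFinset
  have hncardA : F.ncard = A.card := by
    rw [← hcoeA, Set.ncard_coe_finset]
  have hncardA' : F'.ncard = A'.card := by
    rw [← hcoeA', Set.ncard_coe_finset]
  have hcardsA : ∀ u ∈ A, u.card = e + 1 := by
    intro u hu
    exact hFd u (by rwa [← hcoeA])
  have hcardsA' : ∀ u ∈ A', u.card = e + 1 := by
    intro u hu
    exact hF'd u (by rwa [← hcoeA'])
  have hcompA : ∀ u ∈ A, ∀ v : Finset ℕ, v.card = e + 1 →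
      toColex v ≤ toColex u → v ∈ A := by
    intro u hu v hvc hvle
    have hmem : v ∈ F := hcomp.2 u (by rwa [← hcoeA]) v (Set.subset_univ _) hvc hvle
    rwa [← hcoeA] at hmem
  have hupper := IncKK.incFin_card_upper e A hcardsA hcompA
  have hlower := IncKK.incFin_card_lower (e+1) A' hcardsA'
  have heq1 : (incF F).ncard = (IncKK.incFin A).card := by
    rw [← hcoeA, IncKK.incF_coe, Set.ncard_coe_finset]
  have heq2 : (incF F').ncard = (IncKK.incFin A').card := by
    rw [← hcoeA', IncKK.incF_coe, Set.ncard_coe_finset]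
  have hmeq : A'.card = A.card := by omega
  rw [heq1, heq2]
  rw [hmeq] at hlower
  omega
end

section
/- Let u ∈ binom(ℕ,d). Then Inc(C(u)) = C(u+1), where C(u) is the initial segment of the squashed order determined by u and u+1 = (u_1+1,…,u_d+1). -/
open Finset Finset.Colex

lemma inc1_cases {π : ℕ → ℕ} (hπ : π ∈ Inc1) (x : ℕ) : π x = x ∨ π x = x + 1 := by
  have h1 : x ≤ π x := hπ.1.le_apply
  have h2 : π x ≤ x + 1 := hπ.2 x
  omega

lemma image_pi_le (w : Finset ℕ) {π : ℕ → ℕ} (hπ : π ∈ Inc1) :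
    toColex (w.image π) ≤ toColex (w.image (· + 1)) := by
  classical
  rw [toColex_le_toColex]
  intro a ha hat
  obtain ⟨y, hy, rfl⟩ := Finset.mem_image.mp ha
  have hy2 : π y = y := by
    rcases inc1_cases hπ y with h | h
    · exact h
    · exact absurd (h ▸ Finset.mem_image_of_mem (· + 1) hy) hat
  set W := w.filter (fun z => π z = z) with hW
  have hWne : W.Nonempty := ⟨y, by simp [hW, hy, hy2]⟩
  set x0 := W.max' hWne with hx0def
  have hx0 : x0 ∈ W := Finset.max'_mem _ _
  have hx0w : x0 ∈ w := (Finset.mem_filter.mp hx0).1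
  have hx0fix : π x0 = x0 := (Finset.mem_filter.mp hx0).2
  refine ⟨x0 + 1, Finset.mem_image_of_mem _ hx0w, ?_, ?_⟩
  · intro hb
    obtain ⟨z, hz, hzeq⟩ := Finset.mem_image.mp hb
    rcases inc1_cases hπ z with h | h
    · rw [h] at hzeq
      have hzW : z ∈ W := Finset.mem_filter.mpr ⟨hz, h⟩
      have := Finset.le_max' W z hzW
      omega
    · rw [h] at hzeq
      have hzx : z = x0 := by omega
      rw [hzx, hx0fix] at h
      omega
  · have hymem : y ∈ W := Finset.mem_filter.mpr ⟨hy, hy2⟩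
    have := Finset.le_max' W y hymem
    omega

theorem stmt2 (d : ℕ) (hd : 1 ≤ d) (u : Finset ℕ) (hu : u.card = d) :
    incF {v : Finset ℕ | v.card = d ∧ toColex v ≤ toColex u} =
      {v : Finset ℕ | v.card = d ∧
        toColex v ≤ toColex (u.image (· + 1))} := by
  classical
  ext v
  simp only [incF, Set.mem_setOf_eq]
  constructor
  · rintro ⟨w, ⟨hwcard, hwle⟩, π, hπ, rfl⟩
    refine ⟨by rw [Finset.card_image_of_injective _ hπ.1.injective, hwcard], ?_⟩
    calc toColex (w.image π) ≤ toColex (w.image (· + 1)) := image_pi_le w hπ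
      _ ≤ toColex (u.image (· + 1)) :=
        (toColex_image_le_toColex_image (fun _ _ hab => Nat.add_lt_add_right hab 1 : StrictMono (· + 1))).2 hwle
  · rintro ⟨hvcard, hvle⟩
    -- i = least natural not in v
    have hex : ∃ x, x ∉ v := by
      obtain ⟨x, hx⟩ := Finset.exists_notMem v
      exact ⟨x, hx⟩
    set i := Nat.find hex with hidef
    have hiv : i ∉ v := Nat.find_spec hex
    have hlt : ∀ x, x < i → x ∈ v := by
      intro x hx
      by_contra h
      have h2 := Nat.find_min' hex h
      rw [← hidef] at h2
      omega
    set g : ℕ → ℕ := fun j => if j < i then j else j - 1 with hg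
    set w := v.image g with hwdef
    have hgmono : Set.InjOn g v := by
      intro a ha b hb hab
      have hai : a ≠ i := fun h => hiv (h ▸ ha)
      have hbi : b ≠ i := fun h => hiv (h ▸ hb)
      simp only [hg] at hab
      split_ifs at hab <;> omega
    have hwcard : w.card = d := by rw [hwdef, Finset.card_image_of_injOn hgmono, hvcard]
    have hπ : piShift i ∈ Inc1 := by
      constructor
      · intro a b h; simp only [piShift]; split_ifs <;> omega
      · intro j; simp only [piShift]; split_ifs <;> omega
    have himg : w.image (piShift i) = v := by
      rw [hwdef, Finset.image_image]
      have : ∀ x ∈ v, (piShift i ∘ g) x = x := by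
        intro x hx
        have : x ≠ i := fun h => hiv (h ▸ hx)
        simp only [Function.comp, piShift, hg]
        split_ifs <;> omega
      rw [Finset.image_congr (fun x hx => this x hx), Finset.image_id']
    -- key : toColex w ≤ toColex u
    have hkey : toColex w ≤ toColex u := by
      rw [← toColex_image_le_toColex_image (fun _ _ hab => Nat.add_lt_add_right hab 1 : StrictMono (· + 1))]
      -- w.image (+1) = v.image h where h x = if x < i then x+1 else x
      set h : ℕ → ℕ := fun x => if x < i then x + 1 else x with hh
      have himg2 : w.image (· + 1) = v.image h := by
        rw [hwdef, Finset.image_image]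
        apply Finset.image_congr
        intro x hx
        have hxi : x ≠ i := fun h => hiv (h ▸ hx)
        simp only [Function.comp, hg, hh]
        split_ifs <;> omega
      rw [himg2]
      -- 0 ∉ u.image (+1)
      have h0 : (0 : ℕ) ∉ u.image (· + 1) := by
        simp only [Finset.mem_image]; rintro ⟨x, -, hx⟩; omega
      rw [toColex_le_toColex]
      intro a ha hat
      obtain ⟨x, hx, rfl⟩ := Finset.mem_image.mp ha
      by_cases hxi : x < i
      · -- h x = x + 1, small case: counting argument
        simp only [hh, if_pos hxi]
        simp only [hh, if_pos hxi] at hat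
        have hi1 : 1 ≤ i := by omega
        have hid : i ≤ d := by
          have hsub : Finset.range i ⊆ v := fun z hz => hlt z (Finset.mem_range.mp hz)
          have := Finset.card_le_card hsub
          simpa [hvcard] using this
        -- there exists b ∈ u.image (+1), b > i, b ∉ v
        have hbex : ∃ b ∈ u.image (· + 1), i < b ∧ b ∉ v := by
          by_contra hc
          push_neg at hc
          have hsub : u.image (· + 1) ⊆ (Finset.Icc 1 i).erase (x + 1) ∪ v.filter (i < ·) := by
            intro b hb
            rcases lt_or_ge i b with hbi | hbi
            · exact Finset.mem_union_right _ (Finset.mem_filter.mpr ⟨hc b hb hbi, hbi⟩)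
            · refine Finset.mem_union_left _ (Finset.mem_erase.mpr ⟨?_, ?_⟩)
              · exact fun hbeq => hat (hbeq ▸ hb)
              · refine Finset.mem_Icc.mpr ⟨?_, hbi⟩
                rcases Nat.eq_zero_or_pos b with h0b | h0b
                · exact absurd (h0b ▸ hb) h0
                · omega
          have hcard := Finset.card_le_card hsub
          have hc1 : ((Finset.Icc 1 i).erase (x + 1)).card = i - 1 := by
            rw [Finset.card_erase_of_mem (Finset.mem_Icc.mpr ⟨by omega, by omega⟩),
              Nat.card_Icc]
            omega
          have hc2 : (v.filter (i < ·)).card = d - i := by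
            have hfilt : v.filter (fun b => ¬ i < b) = Finset.range i := by
              ext z
              simp only [Finset.mem_filter, Finset.mem_range, not_lt]
              constructor
              · rintro ⟨hz, hzi⟩
                rcases Nat.lt_or_ge z i with h' | h'
                · exact h'
                · have : z = i := by omega
                  exact absurd (this ▸ hz) hiv
              · intro hz; exact ⟨hlt z hz, by omega⟩
            have := Finset.card_filter_add_card_filter_not (s := v) (p := (i < ·))
            rw [hfilt] at this
            simp only [Finset.card_range, hvcard] at this
            omega
          have hcu : (u.image (· + 1)).card = d := by
            rw [Finset.card_image_of_injective _ (add_left_injective 1 : Function.Injective (· + 1)), hu]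
          rw [hcu] at hcard
          have := Finset.card_union_le ((Finset.Icc 1 i).erase (x + 1)) (v.filter (i < ·))
          omega
        obtain ⟨b, hb, hbi, hbv⟩ := hbex
        refine ⟨b, hb, ?_, by omega⟩
        intro hbmem
        obtain ⟨z, hz, hzeq⟩ := Finset.mem_image.mp hbmem
        have hzeq' : (if z < i then z + 1 else z) = b := hzeq
        split_ifs at hzeq' with hzi
        · omega
        · exact hbv (hzeq' ▸ hz)
      · -- h x = x, large case: use hvle
        have hxi' : i < x := by
          rcases Nat.lt_or_ge i x with h' | h'
          · exact h'
          · have : x = i := by omega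
            exact absurd (this ▸ hx) hiv
        simp only [hh, if_neg hxi]
        simp only [hh, if_neg hxi] at hat
        obtain ⟨b, hbt, hbv, hab⟩ := (toColex_le_toColex.mp hvle) hx hat
        refine ⟨b, hbt, ?_, hab⟩
        intro hbmem
        obtain ⟨z, hz, hzeq⟩ := Finset.mem_image.mp hbmem
        have hzeq' : (if z < i then z + 1 else z) = b := hzeq
        split_ifs at hzeq' with hzi
        · -- b = z + 1 ≤ i, but b ≥ a = x > i
          omega
        · exact hbv (hzeq' ▸ hz)
    exact ⟨w, ⟨hwcard, hkey⟩, piShift i, hπ, himg.symm⟩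
end

section
/- Let u ∈ binom(ℕ,d). Then Inc(B(u)) = B(u+1), where B(u) is the initial segment of the Borel order determined by u and u+1 = (u_1+1,…,u_d+1). -/
lemma sort_image_of_mono (v : Finset ℕ) (f : ℕ → ℕ)
    (hf : ∀ x ∈ v, ∀ y ∈ v, x < y → f x < f y) :
    (v.image f).sort (· ≤ ·) = (v.sort (· ≤ ·)).map f := by
  have hinj : ∀ x ∈ v, ∀ y ∈ v, f x = f y → x = y := by
    intro x hx y hy hxy
    rcases lt_trichotomy x y with h | h | h
    · exact absurd hxy (hf x hx y hy h).ne
    · exact h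
    · exact absurd hxy.symm (hf y hy x hx h).ne
  refine (fun p s1 s2 => List.Perm.eq_of_pairwise' s1 s2 p) ?_ (Finset.pairwise_sort _ _) ?_
  · rw [List.perm_ext_iff_of_nodup (Finset.sort_nodup _ _)
      ((Finset.sort_nodup v _).map_on (fun x hx y hy => hinj x (Finset.mem_sort _ |>.1 hx) y (Finset.mem_sort _ |>.1 hy)))]
    intro a
    simp [Finset.mem_sort, List.mem_map, Finset.mem_image]
  · refine List.pairwise_map.2 ?_
    refine (Finset.sortedLT_sort v).pairwise.imp_of_mem ?_
    intro a b ha hb h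
    exact (hf a (Finset.mem_sort _ |>.1 ha) b (Finset.mem_sort _ |>.1 hb) h).le

theorem stmt3 (d : ℕ) (hd : 1 ≤ d) (u : Finset ℕ) (hu : u.card = d) :
    incF {v : Finset ℕ | BorelLE v u} = {v : Finset ℕ | BorelLE v (u.image (· + 1))} := by
  have hu1 : (u.image (· + 1)).sort (· ≤ ·) = (u.sort (· ≤ ·)).map (· + 1) :=
    sort_image_of_mono u _ (fun x _ y _ h => by omega)
  ext v
  simp only [incF, Set.mem_setOf_eq]
  constructor
  · rintro ⟨w, hw, π, ⟨hπmono, hπle⟩, rfl⟩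
    unfold BorelLE at *
    rw [sort_image_of_mono w π (fun x _ y _ h => hπmono h), hu1,
      List.forall₂_map_left_iff, List.forall₂_map_right_iff]
    exact hw.imp (fun {a b} h => by have := hπle a; omega)
  · intro hv
    unfold BorelLE at hv
    rw [hu1] at hv
    set A := u.sort (· ≤ ·) with hAdef
    set B := v.sort (· ≤ ·) with hBdef
    have hlen : B.length = A.length := by
      have := hv.length_eq; simpa using this
    have hAB : ∀ i, i < B.length → B.getD i 0 ≤ A.getD i 0 + 1 := by
      intro i hi
      have h2 : i < (A.map (· + 1)).length := by simpa using hlen ▸ hi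
      have := (List.forall₂_iff_get.1 hv).2 i hi h2
      simp only [List.get_eq_getElem, List.getElem_map] at this
      rw [List.getD_eq_get _ _ ⟨_, hi⟩, List.getD_eq_get _ _ ⟨_, (by simpa using h2)⟩]
      simpa using this
    have hBmono : ∀ i j, i < j → j < B.length → B.getD i 0 < B.getD j 0 := by
      intro i j hij hj
      have h := (Finset.sortedLT_sort v).strictMono_get
        (show (⟨i, lt_trans hij hj⟩ : Fin B.length) < ⟨j, hj⟩ from hij)
      rwa [List.getD_eq_get _ _ ⟨_, (lt_trans hij hj)⟩, List.getD_eq_get _ _ ⟨_, hj⟩]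
    have hAmono : ∀ i j, i < j → j < A.length → A.getD i 0 < A.getD j 0 := by
      intro i j hij hj
      have h := (Finset.sortedLT_sort u).strictMono_get
        (show (⟨i, lt_trans hij hj⟩ : Fin A.length) < ⟨j, hj⟩ from hij)
      rwa [List.getD_eq_get _ _ ⟨_, (lt_trans hij hj)⟩, List.getD_eq_get _ _ ⟨_, hj⟩]
    by_cases hle : List.Forall₂ (· ≤ ·) B A
    · exact ⟨v, hle, id, ⟨strictMono_id, fun j => by simp⟩, by simp⟩
    · have hex : ∃ i, i < B.length ∧ A.getD i 0 < B.getD i 0 := by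
        by_contra hc
        push_neg at hc
        apply hle
        rw [List.forall₂_iff_get]
        refine ⟨hlen, fun i h1 h2 => ?_⟩
        have := hc i h1
        rw [List.getD_eq_get _ _ ⟨_, h1⟩, List.getD_eq_get _ _ ⟨_, h2⟩] at this
        omega
      obtain ⟨i0, ⟨hi0len, hi0lt⟩, hmin'⟩ :
          ∃ i0, (i0 < B.length ∧ A.getD i0 0 < B.getD i0 0) ∧
            ∀ i, i < i0 → ¬(i < B.length ∧ A.getD i 0 < B.getD i 0) :=
        ⟨Nat.find hex, Nat.find_spec hex, fun i h => Nat.find_min hex h⟩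
      set t := B.getD i0 0 with htdef
      have ht1 : 1 ≤ t := by omega
      have hmin : ∀ i, i < i0 → i < B.length → B.getD i 0 ≤ A.getD i 0 := by
        intro i hi hiB
        have := hmin' i hi
        simp only [not_and, not_lt] at this
        exact this hiB
      have hidx : ∀ x ∈ v, ∃ i, i < B.length ∧ B.getD i 0 = x := by
        intro x hx
        have : x ∈ B := (Finset.mem_sort _).2 hx
        obtain ⟨⟨i, hi⟩, h⟩ := List.mem_iff_get.1 this
        exact ⟨i, hi, by rw [List.getD_eq_get _ _ ⟨_, hi⟩]; exact h⟩
      have hnoteq : ∀ x ∈ v, x ≠ t - 1 := by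
        intro x hx hxeq
        obtain ⟨i, hi, hBi⟩ := hidx x hx
        have hilt : i < i0 := by
          rcases lt_trichotomy i i0 with h | h | h
          · exact h
          · subst h; omega
          · have := hBmono i0 i h hi; omega
        have h1 := hmin i hilt hi
        have h2 := hAmono i i0 hilt (hlen ▸ hi0len)
        omega
      set g : ℕ → ℕ := fun x => if x < t then x else x - 1 with hgdef
      have hgmono : ∀ x ∈ v, ∀ y ∈ v, x < y → g x < g y := by
        intro x hx y hy hxy
        have h1 := hnoteq x hx
        have h2 := hnoteq y hy
        simp only [hgdef]
        split_ifs <;> omega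
      have key : ∀ i, i < B.length → g (B.getD i 0) ≤ A.getD i 0 := by
        intro i hiB
        have hab := hAB i hiB
        by_cases hbt : B.getD i 0 < t
        · have hilt : i < i0 := by
            rcases lt_trichotomy i i0 with h | h | h
            · exact h
            · subst h; omega
            · have := hBmono i0 i h hiB; omega
          have := hmin i hilt hiB
          simp only [hgdef]
          split_ifs <;> omega
        · simp only [hgdef]
          split_ifs <;> omega
      refine ⟨v.image g, ?_, piShift (t - 1), ⟨?_, ?_⟩, ?_⟩
      · unfold BorelLE
        rw [sort_image_of_mono v g hgmono]
        rw [List.forall₂_iff_get]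
        refine ⟨by rw [List.length_map]; exact hlen, fun i h1 h2 => ?_⟩
        have hiB : i < B.length := by rw [List.length_map] at h1; exact h1
        simp only [List.get_eq_getElem, List.getElem_map]
        have := key i hiB
        rw [List.getD_eq_get _ _ ⟨_, hiB⟩, List.getD_eq_get _ _ ⟨_, h2⟩] at this
        exact this
      · intro a b hab
        simp only [piShift]
        split_ifs <;> omega
      · intro j
        simp only [piShift]
        split_ifs <;> omega
      · rw [Finset.image_image]
        have heq : ∀ x ∈ (v : Finset ℕ), (piShift (t - 1) ∘ g) x = x := by
          intro x hx
          have := hnoteq x hx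
          simp only [Function.comp_apply, hgdef, piShift]
          split_ifs <;> omega
        exact ((Finset.image_congr (g := id) (fun x hx => heq x hx)).trans
          Finset.image_id).symm
end

section
/- If a finite family F ⊆ binom(ℕ,d) is shifted, then Inc(F) is also shifted. -/
lemma piShift_strictMono (t : ℕ) : StrictMono (piShift t) := by
  intro j k hjk
  unfold piShift
  split_ifs with h1 h2 h2 <;> omega

lemma piShift_le (t j : ℕ) : piShift t j ≤ j + 1 := by
  unfold piShift; split_ifs <;> omega

lemma key_shift (L : List ℕ) : ∀ (W : List ℕ), L.Pairwise (·<·) → W.Pairwise (·<·) →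
    List.Forall₂ (fun a b => b ≤ a + 1) L W →
    ∃ L' t, L'.Pairwise (·<·) ∧ List.Forall₂ (·≤·) L' L ∧ W = L'.map (piShift t) ∧
      ∀ a A b B x X, L = a :: A → W = b :: B → L' = x :: X →
        (b ≤ a ∧ x = b) ∨ (x = b - 1 ∧ a < b) := by
  induction L with
  | nil =>
    intro W _ _ hF
    cases hF
    exact ⟨[], 0, by simp, .nil, rfl, by simp⟩
  | cons a A ih =>
    intro W hL hW hF
    obtain ⟨b, B, hab, hAB, rfl⟩ := List.forall₂_cons_left_iff.mp hF
    by_cases hba : b ≤ a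
    · obtain ⟨L'', t'', hs, hle, hmap, hhead⟩ :=
        ih B (List.pairwise_cons.mp hL).2 (List.pairwise_cons.mp hW).2 hAB
      have hgt : ∀ y ∈ L'', b < y := by
        cases L'' with
        | nil => intro y hy; simp at hy
        | cons x X =>
          cases A with
          | nil => cases hAB; simp at hmap
          | cons a₂ A₂ =>
            obtain ⟨b₂, B₂, hab₂, hAB₂, hBeq⟩ := List.forall₂_cons_left_iff.mp hAB
            have hx : b < x := by
              have hh := hhead a₂ A₂ b₂ B₂ x X rfl hBeq rfl
              have hb2 : b < b₂ :=
                (List.pairwise_cons.mp hW).1 b₂ (by rw [hBeq]; exact List.mem_cons_self)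
              have ha2 : a < a₂ := (List.pairwise_cons.mp hL).1 a₂ (List.mem_cons_self)
              rcases hh with ⟨h1, h2⟩ | ⟨h1, h2⟩ <;> omega
            intro y hy
            rcases List.mem_cons.mp hy with rfl | hy
            · exact hx
            · exact hx.trans ((List.pairwise_cons.mp hs).1 y hy)
      refine ⟨b :: L'', max t'' (b+1), ?_, .cons hba hle, ?_, ?_⟩
      · exact List.pairwise_cons.mpr ⟨hgt, hs⟩
      · simp only [List.map_cons]
        have hb : piShift (max t'' (b+1)) b = b := by
          unfold piShift; split_ifs <;> omega
        rw [hb]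
        congr 1
        rw [hmap]
        apply List.map_congr_left
        intro y hy
        have := hgt y hy
        unfold piShift
        split_ifs <;> omega
      · intro a' A' b' B' x X h1 h2 h3
        cases h1; cases h2; cases h3
        exact Or.inl ⟨hba, rfl⟩
    · push_neg at hba
      have hb1 : 1 ≤ b := by omega
      have hmem : ∀ y ∈ b :: B, b ≤ y := by
        intro y hy
        rcases List.mem_cons.mp hy with rfl | hy
        · exact le_refl _
        · exact le_of_lt ((List.pairwise_cons.mp hW).1 y hy)
      refine ⟨(b :: B).map (· - 1), b - 1, ?_, ?_, ?_, ?_⟩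
      · rw [List.pairwise_map]
        refine hW.imp_of_mem ?_
        intro x y hx hy hxy
        have := hmem x hx
        omega
      · rw [List.forall₂_map_left_iff]
        refine hF.flip.imp ?_
        intro x y h
        replace h : x ≤ y + 1 := h
        omega
      · rw [List.map_map]
        conv_lhs => rw [← List.map_id (b :: B)]
        apply List.map_congr_left
        intro y hy
        have := hmem y hy
        simp only [Function.comp_apply, id_eq]
        unfold piShift
        split_ifs <;> omega
      · intro a' A' b' B' x X h1 h2 h3
        cases h1; cases h2
        simp only [List.map_cons, List.cons.injEq] at h3
        exact Or.inr ⟨h3.1.symm, hba⟩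

lemma list_toFinset_map' (f : ℕ → ℕ) (l : List ℕ) :
    (l.map f).toFinset = l.toFinset.image f := by
  ext x; simp

lemma sort_image' {f : ℕ → ℕ} (hf : StrictMono f) (s : Finset ℕ) :
    (s.image f).sort (· ≤ ·) = (s.sort (· ≤ ·)).map f := by
  have hnd : ((s.sort (· ≤ ·)).map f).Nodup :=
    (Finset.sort_nodup s _).map hf.injective
  have hsorted : ((s.sort (· ≤ ·)).map f).Pairwise (· ≤ ·) := by
    rw [List.pairwise_map]
    exact (Finset.sortedLT_sort s).pairwise.imp (fun h => le_of_lt (hf h))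
  have h := (List.toFinset_sort (· ≤ ·) hnd).mpr hsorted
  rwa [list_toFinset_map', Finset.sort_toFinset] at h

theorem stmt4 (d : ℕ) (hd : 1 ≤ d) (F : Set (Finset ℕ)) (hFfin : F.Finite)
    (hFd : ∀ u ∈ F, u.card = d) (hsh : IsShifted F) : IsShifted (incF F) := by
  intro v hv w hw
  obtain ⟨u, huF, π, hπ, rfl⟩ := hv
  obtain ⟨hmono, hle⟩ := hπ
  rw [BorelLE, sort_image' hmono] at hw
  have hF2 : List.Forall₂ (fun a b => b ≤ a + 1) (u.sort (· ≤ ·)) (w.sort (· ≤ ·)) := by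
    have h1 := List.forall₂_map_right_iff.mp hw
    exact h1.flip.imp (fun _ _ h => le_trans h (hle _))
  obtain ⟨L', t, hs', hle', hmap, -⟩ :=
    key_shift (u.sort (· ≤ ·)) (w.sort (· ≤ ·)) (Finset.sortedLT_sort u).pairwise
      (Finset.sortedLT_sort w).pairwise hF2
  have hnd' : L'.Nodup := hs'.nodup
  have hsort' : L'.toFinset.sort (· ≤ ·) = L' :=
    (List.toFinset_sort (· ≤ ·) hnd').mpr (hs'.imp le_of_lt)
  have hu'F : L'.toFinset ∈ F := by
    refine hsh u huF _ ?_
    rw [BorelLE, hsort']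
    exact hle'
  have hwimg : w = L'.toFinset.image (piShift t) := by
    have h2 : (L'.toFinset.image (piShift t)).sort (· ≤ ·) = w.sort (· ≤ ·) := by
      rw [sort_image' (piShift_strictMono t), hsort', ← hmap]
    have h3 := congrArg List.toFinset h2
    rwa [Finset.sort_toFinset, Finset.sort_toFinset, eq_comm] at h3
  exact ⟨L'.toFinset, hu'F, piShift t, ⟨piShift_strictMono t, piShift_le t⟩, hwimg⟩
end

section
/- Let u = (u_1,…,u_d) ∈ binom(ℕ,d). Then the Inc-image of the singleton {u} equals the union of {π_i(u)} over 1 ≤ i ≤ u_d+1; explicitly, Inc({u}) = {u, (u_1,…,u_{d-1},u_d+1), (u_1,…,u_{d-1}+1,u_d+1), …, (u_1,u_2+1,…,u_d+1), (u_1+1,u_2+1,…,u_d+1)}, i.e. it consists of the d-sets obtained from u by adding 1 to the last j coordinates for j = 0,1,…,d. -/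
lemma smono_add (f : ℕ → ℕ) (hf : StrictMono f) (a k : ℕ) : f a + k ≤ f (a + k) := by
  induction k with
  | zero => simp
  | succ k ih =>
    have h2 : f (a + k) < f (a + k + 1) := hf (by omega)
    have h3 : a + (k + 1) = a + k + 1 := by omega
    rw [h3]; omega

lemma piShift_mem_Inc1 (i : ℕ) : piShift i ∈ Inc1 := by
  constructor
  · intro a b hab
    simp only [piShift]
    split <;> split <;> omega
  · intro j
    simp only [piShift]
    split <;> omega

theorem stmt5 (d : ℕ) (hd : 1 ≤ d) (u : Finset ℕ) (hu : u.card = d) (hne : u.Nonempty) :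
    incF {u} = {v : Finset ℕ | ∃ i ≤ u.max' hne + 1, v = u.image (piShift i)} ∧
      ∀ i : ℕ, u.image (piShift i) =
        u.filter (fun x => x < i) ∪ (u.filter (fun x => i ≤ x)).image (· + 1) := by
  constructor
  · ext v
    simp only [incF, Set.mem_setOf_eq, Set.mem_singleton_iff]
    constructor
    · rintro ⟨w, rfl, π, ⟨hm, hb⟩, rfl⟩
      set M := w.max' hne with hM
      have hle : ∀ j, j ≤ π j := fun j => by
        have := smono_add π hm 0 j
        simp only [Nat.zero_add] at this; omega
      by_cases h : π M = M + 1
      · have hex : ∃ j, π j = j + 1 := ⟨M, h⟩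
        set i := Nat.find hex with hi
        refine ⟨i, by have : i ≤ M := Nat.find_le h; omega, ?_⟩
        have hπ : π = piShift i := by
          funext j
          simp only [piShift]
          split
          · have hne' : π j ≠ j + 1 := Nat.find_min hex (by omega)
            have := hle j; have := hb j; omega
          · have hij : i ≤ j := by omega
            have h1 : π i = i + 1 := Nat.find_spec hex
            have := smono_add π hm i (j - i)
            rw [Nat.add_sub_cancel' hij] at this
            have := hb j; omega
        rw [hπ]
      · refine ⟨M + 1, le_refl _, ?_⟩
        apply Finset.image_congr
        intro x hx
        have hxM : x ≤ M := Finset.le_max' w x hx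
        have h1 := smono_add π hm x (M - x)
        rw [Nat.add_sub_cancel' hxM] at h1
        have := hb M; have := hle M; have := hle x
        have hπx : π x = x := by omega
        simp [piShift, hπx, Nat.lt_succ_of_le hxM]
    · rintro ⟨i, hi, rfl⟩
      exact ⟨u, rfl, piShift i, piShift_mem_Inc1 i, rfl⟩
  · intro i
    ext x
    simp only [Finset.mem_image, Finset.mem_union, Finset.mem_filter, piShift]
    constructor
    · rintro ⟨a, ha, rfl⟩
      by_cases h : a < i
      · left; simp [h, ha]
      · right; exact ⟨a, ⟨ha, by omega⟩, by simp [h]⟩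
    · rintro (⟨hx, hxi⟩ | ⟨a, ⟨ha, hai⟩, rfl⟩)
      · exact ⟨x, hx, if_pos hxi⟩
      · exact ⟨a, ha, if_neg (by omega)⟩
end

section
/- Let F ⊆ binom(ℕ,d) be a finite family with d ≥ 2. Then |F| = |C^(l)(F)| = |C^(r)(F)|, and moreover C^(l)(F) ≤ F and C^(r)(F) ≤ F in the extended squashed order on finite families. -/
open Finset Finset.Colex Set

namespace St7

noncomputable local instance (T : Set ℕ) : DecidablePred (· ∈ T) := Classical.decPred _

def rkSet (T : Set ℕ) (n : ℕ) : Set ℕ := {m | m ∈ T ∧ {m' | m' ∈ T ∧ m' ≤ m}.ncard ≤ n}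

lemma down_eq (T : Set ℕ) (m : ℕ) :
    {m' | m' ∈ T ∧ m' ≤ m} = ↑((Finset.range (m+1)).filter (· ∈ T)) := by
  ext x; simp [Nat.lt_succ_iff, and_comm]

lemma down_ncard (T : Set ℕ) (m : ℕ) :
    {m' | m' ∈ T ∧ m' ≤ m}.ncard = Nat.count (· ∈ T) (m+1) := by
  rw [down_eq, Set.ncard_coe_finset, Nat.count_eq_card_filter_range]

lemma down_finite (T : Set ℕ) (m : ℕ) : {m' | m' ∈ T ∧ m' ≤ m}.Finite := by
  rw [down_eq]; exact Finset.finite_toSet _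

lemma rkSet_eq {T : Set ℕ} (hT : T.Infinite) (n : ℕ) :
    rkSet T n = Nat.nth (· ∈ T) '' (Set.Iio n) := by
  have hT' : (setOf (· ∈ T)).Infinite := hT
  ext m
  constructor
  · rintro ⟨hm, hc⟩
    rw [down_ncard, Nat.count_succ, if_pos hm] at hc
    exact ⟨Nat.count (· ∈ T) m, Set.mem_Iio.2 (by omega), Nat.nth_count hm⟩
  · rintro ⟨i, hi, rfl⟩
    have hm : Nat.nth (· ∈ T) i ∈ T := Nat.nth_mem_of_infinite hT' i
    refine ⟨hm, ?_⟩
    rw [down_ncard, Nat.count_succ, if_pos hm, Nat.count_nth_of_infinite hT']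
    simpa using hi

lemma rkSet_ncard {T : Set ℕ} (hT : T.Infinite) (n : ℕ) : (rkSet T n).ncard = n := by
  have hT' : (setOf (· ∈ T)).Infinite := hT
  rw [rkSet_eq hT, Set.ncard_image_of_injective _ (Nat.nth_injective hT')]
  have : (Set.Iio n) = ↑(Finset.range n) := by ext; simp
  rw [this, Set.ncard_coe_finset, Finset.card_range]

lemma rkSet_finite {T : Set ℕ} (hT : T.Infinite) (n : ℕ) : (rkSet T n).Finite := by
  rw [rkSet_eq hT]
  exact (Set.finite_Iio n).image _

lemma mem_rkSet_of_le {T : Set ℕ} {n m m' : ℕ} (hm : m ∈ rkSet T n) (hm' : m' ∈ T)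
    (h : m' ≤ m) : m' ∈ rkSet T n := by
  refine ⟨hm', le_trans (Set.ncard_le_ncard ?_ (down_finite T m)) hm.2⟩
  rintro x ⟨hx, hxm⟩; exact ⟨hx, hxm.trans h⟩

lemma lt_of_not_mem_rkSet {T : Set ℕ} {n m m'' : ℕ} (hm : m ∈ rkSet T n) (h1 : m'' ∈ T)
    (h2 : m'' ∉ rkSet T n) : m < m'' := by
  by_contra h
  exact h2 (mem_rkSet_of_le hm h1 (by omega))

lemma exists_ge_of_mem_rkSet {T G : Set ℕ} {n m : ℕ} (hG : G ⊆ T) (hGf : G.Finite)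
    (hGc : G.ncard = n) (hm : m ∈ rkSet T n) : ∃ v ∈ G, m ≤ v := by
  by_contra h
  push_neg at h
  have hsub : insert m G ⊆ {m' | m' ∈ T ∧ m' ≤ m} := by
    rintro x (rfl | hx)
    · exact ⟨hm.1, le_rfl⟩
    · exact ⟨hG hx, (h x hx).le⟩
  have hmG : m ∉ G := fun hmm => lt_irrefl m (h m hmm)
  have := Set.ncard_le_ncard hsub (down_finite T m)
  rw [Set.ncard_insert_of_notMem hmG hGf, hGc] at this
  have := hm.2
  omega




def fgs (s : Finset ℕ) : ℕ := ∑ i ∈ s, 2^i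

lemma fgs_le_iff {s t : Finset ℕ} : fgs s ≤ fgs t ↔ toColex s ≤ toColex t :=
  Finset.geomSum_le_geomSum_iff_toColex_le_toColex le_rfl

lemma fgs_lt_iff {s t : Finset ℕ} : fgs s < fgs t ↔ toColex s < toColex t :=
  Finset.geomSum_lt_geomSum_iff_toColex_lt_toColex le_rfl

lemma fgs_inj : Function.Injective fgs := Finset.geomSum_injective le_rfl

def famS (A : Set ℕ) (e : ℕ) : Set (Finset ℕ) := {w | ↑w ⊆ A ∧ w.card = e}

lemma famS_infinite {A : Set ℕ} (hA : A.Infinite) {e : ℕ} (he : e ≠ 0) :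
    (famS A e).Infinite := by
  have f := hA.natEmbedding
  have hg : ∀ n : ℕ, ((Finset.range e).image (fun i => (f (n * e + i) : ℕ))) ∈ famS A e := by
    intro n
    constructor
    · intro x hx
      simp only [coe_image, Set.mem_image, Finset.mem_coe, Finset.mem_range] at hx
      obtain ⟨i, _, rfl⟩ := hx
      exact (f _).2
    · rw [Finset.card_image_of_injective _ ?_, Finset.card_range]
      intro a b hab
      have := f.injective (Subtype.ext hab)
      omega
  apply Set.infinite_of_injective_forall_mem (f := fun n => (Finset.range e).image (fun i => (f (n * e + i) : ℕ))) ?_ hg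
  intro a b hab
  simp only at hab
  have ha : (f (a * e) : ℕ) ∈ (Finset.range e).image (fun i => (f (b * e + i) : ℕ)) := by
    rw [← hab]
    exact Finset.mem_image.2 ⟨0, Finset.mem_range.2 (Nat.pos_of_ne_zero he), by simp⟩
  obtain ⟨i, hi, hfi⟩ := Finset.mem_image.1 ha
  have := f.injective (Subtype.ext hfi)
  rw [Finset.mem_range] at hi
  -- b * e + i = a * e, i < e ⇒ a = b
  have he' : 0 < e := Nat.pos_of_ne_zero he
  nlinarith [this]


lemma fgs_famS_infinite {A : Set ℕ} (hA : A.Infinite) {e : ℕ} (he : e ≠ 0) :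
    (fgs '' famS A e).Infinite := (famS_infinite hA he).image (fgs_inj.injOn)

lemma down_image (A : Set ℕ) (e : ℕ) (v : Finset ℕ) :
    {m' | m' ∈ fgs '' famS A e ∧ m' ≤ fgs v}
      = fgs '' {w | w ∈ famS A e ∧ toColex w ≤ toColex v} := by
  ext m
  constructor
  · rintro ⟨⟨w, hw, rfl⟩, hle⟩
    exact ⟨w, ⟨hw, fgs_le_iff.1 hle⟩, rfl⟩
  · rintro ⟨w, ⟨hw, hle⟩, rfl⟩
    exact ⟨⟨w, hw, rfl⟩, fgs_le_iff.2 hle⟩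

lemma compressionIn_eq (A : Set ℕ) (e n : ℕ) :
    compressionIn A e n = {v | v ∈ famS A e ∧ fgs v ∈ rkSet (fgs '' famS A e) n} := by
  ext v
  have hset : {w : Finset ℕ | ↑w ⊆ A ∧ w.card = e ∧ toColex w ≤ toColex v}
      = {w | w ∈ famS A e ∧ toColex w ≤ toColex v} := by
    ext w; simp only [Set.mem_setOf_eq, famS]; tauto
  constructor
  · rintro ⟨h1, h2, h3⟩
    refine ⟨⟨h1, h2⟩, ⟨v, ⟨h1, h2⟩, rfl⟩, ?_⟩
    rw [down_image, Set.ncard_image_of_injective _ fgs_inj, ← hset]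
    exact h3
  · rintro ⟨⟨h1, h2⟩, _, h3⟩
    refine ⟨h1, h2, ?_⟩
    rw [hset]
    rwa [down_image, Set.ncard_image_of_injective _ fgs_inj] at h3

lemma compressionIn_subset (A : Set ℕ) (e n : ℕ) : compressionIn A e n ⊆ famS A e := by
  rw [compressionIn_eq]; exact fun v hv => hv.1

lemma image_fgs_compressionIn (A : Set ℕ) (e n : ℕ) :
    fgs '' compressionIn A e n = rkSet (fgs '' famS A e) n := by
  ext m
  constructor
  · rintro ⟨v, hv, rfl⟩
    rw [compressionIn_eq] at hv
    exact hv.2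
  · intro hm
    obtain ⟨v, hv, rfl⟩ := hm.1
    exact ⟨v, (compressionIn_eq A e n).symm ▸ ⟨hv, hm⟩, rfl⟩

lemma compressionIn_ncard {A : Set ℕ} (hA : A.Infinite) {e : ℕ} (he : e ≠ 0) (n : ℕ) :
    (compressionIn A e n).ncard = n := by
  rw [← Set.ncard_image_of_injective _ fgs_inj, image_fgs_compressionIn,
    rkSet_ncard (fgs_famS_infinite hA he)]

lemma compressionIn_finite {A : Set ℕ} (hA : A.Infinite) {e : ℕ} (he : e ≠ 0) (n : ℕ) :
    (compressionIn A e n).Finite := by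
  have h := rkSet_finite (fgs_famS_infinite hA he) n
  rw [← image_fgs_compressionIn] at h
  exact Set.Finite.of_finite_image h fgs_inj.injOn

lemma compressionIn_zero {A : Set ℕ} (hA : A.Infinite) {e : ℕ} (he : e ≠ 0) :
    compressionIn A e 0 = ∅ :=
  (Set.ncard_eq_zero (compressionIn_finite hA he 0)).1 (compressionIn_ncard hA he 0)

lemma lt_of_mem_compressionIn_not_mem {A : Set ℕ} {e n : ℕ} {w v : Finset ℕ}
    (hw : w ∈ compressionIn A e n) (hv : v ∈ famS A e) (hv' : v ∉ compressionIn A e n) :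
    toColex w < toColex v := by
  rw [compressionIn_eq] at hw hv'
  have h1 : fgs v ∈ fgs '' famS A e := ⟨v, hv, rfl⟩
  have h2 : fgs v ∉ rkSet (fgs '' famS A e) n := fun h => hv' ⟨hv, h⟩
  exact fgs_lt_iff.1 (lt_of_not_mem_rkSet hw.2 h1 h2)

lemma exists_le_of_mem_compressionIn {A : Set ℕ} {e n : ℕ} {G : Set (Finset ℕ)} {w : Finset ℕ}
    (hG : G ⊆ famS A e) (hGf : G.Finite) (hGc : G.ncard = n)
    (hw : w ∈ compressionIn A e n) : ∃ v ∈ G, toColex w ≤ toColex v := by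
  rw [compressionIn_eq] at hw
  have h := exists_ge_of_mem_rkSet (T := fgs '' famS A e) (G := fgs '' G)
    (Set.image_mono hG) (hGf.image _)
    (by rw [Set.ncard_image_of_injective _ fgs_inj, hGc]) hw.2
  obtain ⟨m, ⟨v, hv, rfl⟩, hle⟩ := h
  exact ⟨v, hv, fgs_le_iff.1 hle⟩


lemma ncard_biUnion_finset {X : Type*} (f : ℕ → Set X) (K : Finset ℕ)
    (hfin : ∀ k ∈ K, (f k).Finite)
    (hdisj : ∀ i j, i ≠ j → Disjoint (f i) (f j)) :
    (⋃ k ∈ K, f k).ncard = ∑ k ∈ K, (f k).ncard := by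
  classical
  induction K using Finset.induction with
  | empty => simp
  | @insert a K ha ih =>
    have hd2 : Disjoint (f a) (⋃ k ∈ K, f k) := by
      rw [Set.disjoint_left]
      intro x hx hx2
      rw [Set.mem_iUnion₂] at hx2
      obtain ⟨k, hk, hxk⟩ := hx2
      exact Set.disjoint_left.1 (hdisj a k (by rintro rfl; exact ha hk)) hx hxk
    have hfa : (f a).Finite := hfin a (Finset.mem_insert_self a K)
    have hfK : (⋃ k ∈ K, f k).Finite := by
      apply Set.Finite.biUnion K.finite_toSet
      intro k hk
      exact hfin k (Finset.mem_insert_of_mem hk)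
    rw [Finset.set_biUnion_insert, Finset.sum_insert ha, Set.ncard_union_eq hd2 hfa hfK,
      ih fun k hk => hfin k (Finset.mem_insert_of_mem hk)]

lemma iUnion_eq_biUnion {X : Type*} (f : ℕ → Set X) (K : Finset ℕ)
    (hK : ∀ k ∉ K, f k = ∅) : (⋃ k, f k) = ⋃ k ∈ K, f k := by
  ext x
  simp only [Set.mem_iUnion]
  constructor
  · rintro ⟨k, hk⟩
    by_cases h : k ∈ K
    · exact ⟨k, h, hk⟩
    · rw [hK k h] at hk; exact absurd hk (Set.notMem_empty x)
  · rintro ⟨k, _, hk⟩; exact ⟨k, hk⟩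

lemma ncard_iUnion_eq_sum {X : Type*} (f : ℕ → Set X) (K : Finset ℕ)
    (hfin : ∀ k ∈ K, (f k).Finite) (hK : ∀ k ∉ K, f k = ∅)
    (hdisj : ∀ i j, i ≠ j → Disjoint (f i) (f j)) :
    (⋃ k, f k).ncard = ∑ k ∈ K, (f k).ncard := by
  rw [iUnion_eq_biUnion f K hK, ncard_biUnion_finset f K hfin hdisj]

lemma iUnion_finite {X : Type*} (f : ℕ → Set X) (K : Finset ℕ)
    (hfin : ∀ k ∈ K, (f k).Finite) (hK : ∀ k ∉ K, f k = ∅) :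
    (⋃ k, f k).Finite := by
  rw [iUnion_eq_biUnion f K hK]
  exact Set.Finite.biUnion K.finite_toSet hfin



section Slices

variable {d : ℕ} {F : Set (Finset ℕ)} {k : ℕ} {w : Finset ℕ}

lemma hatL_not_mem (hw : w ∈ hatL F k) : k ∉ w := fun h => lt_irrefl k (hw.1 k h)

lemma hatL_card (hFd : ∀ u ∈ F, u.card = d) (hd : 2 ≤ d) (hw : w ∈ hatL F k) :
    w.card = d - 1 := by
  have h := hFd _ hw.2
  rw [Finset.card_insert_of_notMem (hatL_not_mem hw)] at h
  omega

lemma hatL_finite (hFfin : F.Finite) : (hatL F k).Finite := by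
  apply Set.Finite.subset (hFfin.image (fun u => u.erase k))
  intro w hw
  exact ⟨insert k w, hw.2, by simpa using Finset.erase_insert (hatL_not_mem hw)⟩

lemma hatL_sub (hFd : ∀ u ∈ F, u.card = d) (hd : 2 ≤ d) :
    hatL F k ⊆ famS {j | k < j} (d - 1) :=
  fun w hw => ⟨fun x hx => hw.1 x hx, hatL_card hFd hd hw⟩

lemma mem_Lslice {u : Finset ℕ} :
    u ∈ insert k '' hatL F k ↔ u ∈ F ∧ k ∈ u ∧ ∀ x ∈ u, k ≤ x := by
  constructor
  · rintro ⟨w, hw, rfl⟩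
    refine ⟨hw.2, Finset.mem_insert_self k w, ?_⟩
    intro x hx
    rcases Finset.mem_insert.1 hx with rfl | hx
    · exact le_rfl
    · exact (hw.1 x hx).le
  · rintro ⟨hu, hk, hmin⟩
    refine ⟨u.erase k, ⟨?_, ?_⟩, Finset.insert_erase hk⟩
    · intro x hx
      exact lt_of_le_of_ne (hmin x (Finset.mem_of_mem_erase hx))
        (Ne.symm (Finset.ne_of_mem_erase hx))
    · rwa [Finset.insert_erase hk]

lemma F_eq_union_Lslice (hFd : ∀ u ∈ F, u.card = d) (hd : 2 ≤ d) :
    F = ⋃ k, insert k '' hatL F k := by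
  ext u
  rw [Set.mem_iUnion]
  constructor
  · intro hu
    have hne : u.Nonempty := Finset.card_pos.1 (by rw [hFd u hu]; omega)
    exact ⟨u.min' hne, mem_Lslice.2 ⟨hu, u.min'_mem hne, fun x hx => Finset.min'_le u x hx⟩⟩
  · rintro ⟨k, hk⟩
    exact (mem_Lslice.1 hk).1

lemma Lslice_ncard : (insert k '' hatL F k).ncard = (hatL F k).ncard := by
  apply Set.ncard_image_of_injOn
  intro w1 h1 w2 h2 h
  have := congrArg (fun s => Finset.erase s k) h
  simpa [Finset.erase_insert (hatL_not_mem h1), Finset.erase_insert (hatL_not_mem h2)] using this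

lemma Lslice_disjoint {i j : ℕ} (hij : i ≠ j) :
    Disjoint (insert i '' hatL F i) (insert j '' hatL F j) := by
  rw [Set.disjoint_left]
  intro u hi hj
  obtain ⟨_, hiu, hmin_i⟩ := mem_Lslice.1 hi
  obtain ⟨_, hju, hmin_j⟩ := mem_Lslice.1 hj
  exact hij (le_antisymm (hmin_i j hju) (hmin_j i hiu))

-- right versions
lemma hatR_not_mem (hw : w ∈ hatR F k) : k ∉ w := fun h => lt_irrefl k (hw.1 k h)

lemma hatR_card (hFd : ∀ u ∈ F, u.card = d) (hd : 2 ≤ d) (hw : w ∈ hatR F k) :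
    w.card = d - 1 := by
  have h := hFd _ hw.2
  rw [Finset.card_insert_of_notMem (hatR_not_mem hw)] at h
  omega

lemma hatR_finite (hFfin : F.Finite) : (hatR F k).Finite := by
  apply Set.Finite.subset (hFfin.image (fun u => u.erase k))
  intro w hw
  exact ⟨insert k w, hw.2, by simpa using Finset.erase_insert (hatR_not_mem hw)⟩

lemma hatR_sub (hFd : ∀ u ∈ F, u.card = d) (hd : 2 ≤ d) :
    hatR F k ⊆ famS Set.univ (d - 1) :=
  fun w hw => ⟨Set.subset_univ _, hatR_card hFd hd hw⟩

lemma mem_Rslice {u : Finset ℕ} :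
    u ∈ insert k '' hatR F k ↔ u ∈ F ∧ k ∈ u ∧ ∀ x ∈ u, x ≤ k := by
  constructor
  · rintro ⟨w, hw, rfl⟩
    refine ⟨hw.2, Finset.mem_insert_self k w, ?_⟩
    intro x hx
    rcases Finset.mem_insert.1 hx with rfl | hx
    · exact le_rfl
    · exact (hw.1 x hx).le
  · rintro ⟨hu, hk, hmax⟩
    refine ⟨u.erase k, ⟨?_, ?_⟩, Finset.insert_erase hk⟩
    · intro x hx
      exact lt_of_le_of_ne (hmax x (Finset.mem_of_mem_erase hx)) (Finset.ne_of_mem_erase hx)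
    · rwa [Finset.insert_erase hk]

lemma F_eq_union_Rslice (hFd : ∀ u ∈ F, u.card = d) (hd : 2 ≤ d) :
    F = ⋃ k, insert k '' hatR F k := by
  ext u
  rw [Set.mem_iUnion]
  constructor
  · intro hu
    have hne : u.Nonempty := Finset.card_pos.1 (by rw [hFd u hu]; omega)
    exact ⟨u.max' hne, mem_Rslice.2 ⟨hu, u.max'_mem hne, fun x hx => Finset.le_max' u x hx⟩⟩
  · rintro ⟨k, hk⟩
    exact (mem_Rslice.1 hk).1

lemma Rslice_ncard : (insert k '' hatR F k).ncard = (hatR F k).ncard := by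
  apply Set.ncard_image_of_injOn
  intro w1 h1 w2 h2 h
  have := congrArg (fun s => Finset.erase s k) h
  simpa [Finset.erase_insert (hatR_not_mem h1), Finset.erase_insert (hatR_not_mem h2)] using this

lemma Rslice_disjoint {i j : ℕ} (hij : i ≠ j) :
    Disjoint (insert i '' hatR F i) (insert j '' hatR F j) := by
  rw [Set.disjoint_left]
  intro u hi hj
  obtain ⟨_, hiu, hmax_i⟩ := mem_Rslice.1 hi
  obtain ⟨_, hju, hmax_j⟩ := mem_Rslice.1 hj
  exact hij (le_antisymm (hmax_j i hiu) (hmax_i j hju))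

end Slices


section Comp

variable {d : ℕ} {F : Set (Finset ℕ)} {k : ℕ}

lemma Ioi_inf (k : ℕ) : ({j | k < j} : Set ℕ).Infinite := Set.Ioi_infinite k

lemma dm1_ne (hd : 2 ≤ d) : d - 1 ≠ 0 := by omega

-- LEFT compressed slices
lemma LC_eq_image :
    {v | ∃ w ∈ compressionIn {j | k < j} (d - 1) (hatL F k).ncard, v = insert k w}
      = insert k '' compressionIn {j | k < j} (d - 1) (hatL F k).ncard := by
  ext v
  simp only [Set.mem_setOf_eq, Set.mem_image]
  constructor
  · rintro ⟨w, hw, rfl⟩; exact ⟨w, hw, rfl⟩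
  · rintro ⟨w, hw, rfl⟩; exact ⟨w, hw, rfl⟩

lemma LC_mem_props {v : Finset ℕ}
    (hv : v ∈ insert k '' compressionIn {j | k < j} (d - 1) (hatL F k).ncard) :
    k ∈ v ∧ ∀ x ∈ v, k ≤ x := by
  obtain ⟨w, hw, rfl⟩ := hv
  have hw' := (compressionIn_subset _ _ _ hw).1
  refine ⟨Finset.mem_insert_self k w, ?_⟩
  intro x hx
  rcases Finset.mem_insert.1 hx with rfl | hx
  · exact le_rfl
  · exact (hw' hx).le

lemma LC_not_mem {w : Finset ℕ}
    (hw : w ∈ compressionIn {j | k < j} (d - 1) (hatL F k).ncard) : k ∉ w :=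
  fun h => lt_irrefl k ((compressionIn_subset _ _ _ hw).1 h)

lemma LC_finite (hd : 2 ≤ d) :
    ({v | ∃ w ∈ compressionIn {j | k < j} (d - 1) (hatL F k).ncard, v = insert k w}).Finite := by
  rw [LC_eq_image]
  exact ((compressionIn_finite (Ioi_inf k) (dm1_ne hd) _).image _)

lemma LC_ncard (hd : 2 ≤ d) :
    ({v | ∃ w ∈ compressionIn {j | k < j} (d - 1) (hatL F k).ncard, v = insert k w}).ncard
      = (hatL F k).ncard := by
  rw [LC_eq_image, Set.ncard_image_of_injOn, compressionIn_ncard (Ioi_inf k) (dm1_ne hd)]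
  intro w1 h1 w2 h2 h
  have := congrArg (fun s => Finset.erase s k) h
  simpa [Finset.erase_insert (LC_not_mem h1), Finset.erase_insert (LC_not_mem h2)] using this

lemma LC_empty (hd : 2 ≤ d) (hk : hatL F k = ∅) :
    {v | ∃ w ∈ compressionIn {j | k < j} (d - 1) (hatL F k).ncard, v = insert k w} = ∅ := by
  rw [LC_eq_image, hk]
  simp [compressionIn_zero (Ioi_inf k) (dm1_ne hd)]

lemma LC_disjoint (hd : 2 ≤ d) {i j : ℕ} (hij : i ≠ j) :
    Disjoint {v | ∃ w ∈ compressionIn {j' | i < j'} (d - 1) (hatL F i).ncard, v = insert i w}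
      {v | ∃ w ∈ compressionIn {j' | j < j'} (d - 1) (hatL F j).ncard, v = insert j w} := by
  rw [Set.disjoint_left]
  intro u hi hj
  rw [LC_eq_image] at hi hj
  obtain ⟨hiu, hmin_i⟩ := LC_mem_props hi
  obtain ⟨hju, hmin_j⟩ := LC_mem_props hj
  exact hij (le_antisymm (hmin_i j hju) (hmin_j i hiu))

-- RIGHT compressed slices
lemma RC_lt (hFfin : F.Finite) (hFd : ∀ u ∈ F, u.card = d) (hd : 2 ≤ d) {w : Finset ℕ}
    (hw : w ∈ compressionIn Set.univ (d - 1) (hatR F k).ncard) : ∀ x ∈ w, x < k := by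
  obtain ⟨v, hv, hle⟩ := exists_le_of_mem_compressionIn (hatR_sub hFd hd)
    (hatR_finite hFfin) rfl hw
  have hvk : toColex v < toColex {k} := Colex.toColex_lt_singleton.2 hv.1
  exact Colex.toColex_lt_singleton.1 (lt_of_le_of_lt hle hvk)

lemma RC_eq_image :
    {v | ∃ w ∈ compressionIn Set.univ (d - 1) (hatR F k).ncard, v = insert k w}
      = insert k '' compressionIn Set.univ (d - 1) (hatR F k).ncard := by
  ext v
  simp only [Set.mem_setOf_eq, Set.mem_image]
  constructor
  · rintro ⟨w, hw, rfl⟩; exact ⟨w, hw, rfl⟩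
  · rintro ⟨w, hw, rfl⟩; exact ⟨w, hw, rfl⟩

lemma RC_not_mem (hFfin : F.Finite) (hFd : ∀ u ∈ F, u.card = d) (hd : 2 ≤ d) {w : Finset ℕ}
    (hw : w ∈ compressionIn Set.univ (d - 1) (hatR F k).ncard) : k ∉ w :=
  fun h => lt_irrefl k (RC_lt hFfin hFd hd hw k h)

lemma RC_mem_props (hFfin : F.Finite) (hFd : ∀ u ∈ F, u.card = d) (hd : 2 ≤ d) {v : Finset ℕ}
    (hv : v ∈ insert k '' compressionIn Set.univ (d - 1) (hatR F k).ncard) :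
    k ∈ v ∧ ∀ x ∈ v, x ≤ k := by
  obtain ⟨w, hw, rfl⟩ := hv
  refine ⟨Finset.mem_insert_self k w, ?_⟩
  intro x hx
  rcases Finset.mem_insert.1 hx with rfl | hx
  · exact le_rfl
  · exact (RC_lt hFfin hFd hd hw x hx).le

lemma RC_finite (hd : 2 ≤ d) :
    ({v | ∃ w ∈ compressionIn Set.univ (d - 1) (hatR F k).ncard, v = insert k w}).Finite := by
  rw [RC_eq_image]
  exact ((compressionIn_finite Set.infinite_univ (dm1_ne hd) _).image _)

lemma RC_ncard (hFfin : F.Finite) (hFd : ∀ u ∈ F, u.card = d) (hd : 2 ≤ d) :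
    ({v | ∃ w ∈ compressionIn Set.univ (d - 1) (hatR F k).ncard, v = insert k w}).ncard
      = (hatR F k).ncard := by
  rw [RC_eq_image, Set.ncard_image_of_injOn, compressionIn_ncard Set.infinite_univ (dm1_ne hd)]
  intro w1 h1 w2 h2 h
  have := congrArg (fun s => Finset.erase s k) h
  simpa [Finset.erase_insert (RC_not_mem hFfin hFd hd h1),
    Finset.erase_insert (RC_not_mem hFfin hFd hd h2)] using this

lemma RC_empty (hd : 2 ≤ d) (hk : hatR F k = ∅) :
    {v | ∃ w ∈ compressionIn Set.univ (d - 1) (hatR F k).ncard, v = insert k w} = ∅ := by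
  rw [RC_eq_image, hk]
  simp [compressionIn_zero Set.infinite_univ (dm1_ne hd)]

lemma RC_disjoint (hFfin : F.Finite) (hFd : ∀ u ∈ F, u.card = d) (hd : 2 ≤ d) {i j : ℕ}
    (hij : i ≠ j) :
    Disjoint {v | ∃ w ∈ compressionIn Set.univ (d - 1) (hatR F i).ncard, v = insert i w}
      {v | ∃ w ∈ compressionIn Set.univ (d - 1) (hatR F j).ncard, v = insert j w} := by
  rw [Set.disjoint_left]
  intro u hi hj
  rw [RC_eq_image] at hi hj
  obtain ⟨hiu, hmax_i⟩ := RC_mem_props hFfin hFd hd hi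
  obtain ⟨hju, hmax_j⟩ := RC_mem_props hFfin hFd hd hj
  exact hij (le_antisymm (hmax_j i hiu) (hmax_i j hju))

end Comp


section Main

variable {d : ℕ} {F : Set (Finset ℕ)}

lemma bound_exists (hFfin : F.Finite) : ∃ N : ℕ, ∀ u ∈ F, ∀ x ∈ u, x ≤ N := by
  refine ⟨hFfin.toFinset.sup (fun u => u.sup id), fun u hu x hx => ?_⟩
  exact le_trans (Finset.le_sup (f := id) hx) (Finset.le_sup (hFfin.mem_toFinset.2 hu))

lemma hatL_empty_of_big {N k : ℕ} (hN : ∀ u ∈ F, ∀ x ∈ u, x ≤ N) (hk : N < k) :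
    hatL F k = ∅ := by
  ext w
  simp only [Set.mem_empty_iff_false, iff_false]
  intro hw
  exact absurd (hN _ hw.2 k (Finset.mem_insert_self k w)) (by omega)

lemma hatR_empty_of_big {N k : ℕ} (hN : ∀ u ∈ F, ∀ x ∈ u, x ≤ N) (hk : N < k) :
    hatR F k = ∅ := by
  ext w
  simp only [Set.mem_empty_iff_false, iff_false]
  intro hw
  exact absurd (hN _ hw.2 k (Finset.mem_insert_self k w)) (by omega)

lemma Lslice_empty_of_big {N k : ℕ} (hN : ∀ u ∈ F, ∀ x ∈ u, x ≤ N) (hk : N < k) :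
    insert k '' hatL F k = ∅ := by
  rw [hatL_empty_of_big hN hk]; simp

lemma Rslice_empty_of_big {N k : ℕ} (hN : ∀ u ∈ F, ∀ x ∈ u, x ≤ N) (hk : N < k) :
    insert k '' hatR F k = ∅ := by
  rw [hatR_empty_of_big hN hk]; simp

lemma leftComp_ncard (hd : 2 ≤ d) (hFfin : F.Finite) (hFd : ∀ u ∈ F, u.card = d) :
    (leftComp d F).ncard = F.ncard := by
  obtain ⟨N, hN⟩ := bound_exists hFfin
  have hrange : ∀ k, k ∉ Finset.range (N + 1) → N < k := by
    intro k hk; rw [Finset.mem_range] at hk; omega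
  rw [leftComp, ncard_iUnion_eq_sum _ (Finset.range (N + 1))
      (fun k _ => LC_finite hd)
      (fun k hk => LC_empty hd (hatL_empty_of_big hN (hrange k hk)))
      (fun i j hij => LC_disjoint hd hij)]
  conv_rhs => rw [F_eq_union_Lslice hFd hd]
  rw [ncard_iUnion_eq_sum _ (Finset.range (N + 1))
      (fun k _ => (hFfin.subset (fun u hu => (mem_Lslice.1 hu).1)).subset le_rfl.subset
        |>.subset le_rfl.subset)
      (fun k hk => Lslice_empty_of_big hN (hrange k hk))
      (fun i j hij => Lslice_disjoint hij)]
  apply Finset.sum_congr rfl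
  intro k _
  rw [LC_ncard hd, Lslice_ncard]

lemma rightComp_ncard (hd : 2 ≤ d) (hFfin : F.Finite) (hFd : ∀ u ∈ F, u.card = d) :
    (rightComp d F).ncard = F.ncard := by
  obtain ⟨N, hN⟩ := bound_exists hFfin
  have hrange : ∀ k, k ∉ Finset.range (N + 1) → N < k := by
    intro k hk; rw [Finset.mem_range] at hk; omega
  rw [rightComp, ncard_iUnion_eq_sum _ (Finset.range (N + 1))
      (fun k _ => RC_finite hd)
      (fun k hk => RC_empty hd (hatR_empty_of_big hN (hrange k hk)))
      (fun i j hij => RC_disjoint hFfin hFd hd hij)]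
  conv_rhs => rw [F_eq_union_Rslice hFd hd]
  rw [ncard_iUnion_eq_sum _ (Finset.range (N + 1))
      (fun k _ => hFfin.subset (fun u hu => (mem_Rslice.1 hu).1))
      (fun k hk => Rslice_empty_of_big hN (hrange k hk))
      (fun i j hij => Rslice_disjoint hij)]
  apply Finset.sum_congr rfl
  intro k _
  rw [RC_ncard hFfin hFd hd, Rslice_ncard]

lemma leftComp_finite (hd : 2 ≤ d) (hFfin : F.Finite) : (leftComp d F).Finite := by
  obtain ⟨N, hN⟩ := bound_exists hFfin
  refine iUnion_finite _ (Finset.range (N + 1)) (fun k _ => LC_finite hd) ?_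
  intro k hk
  rw [Finset.mem_range] at hk
  exact LC_empty hd (hatL_empty_of_big hN (by omega))

lemma rightComp_finite (hd : 2 ≤ d) (hFfin : F.Finite) : (rightComp d F).Finite := by
  obtain ⟨N, hN⟩ := bound_exists hFfin
  refine iUnion_finite _ (Finset.range (N + 1)) (fun k _ => RC_finite hd) ?_
  intro k hk
  rw [Finset.mem_range] at hk
  exact RC_empty hd (hatR_empty_of_big hN (by omega))

end Main


section FamLE

variable {d : ℕ} {F : Set (Finset ℕ)}

lemma fgs_insert {k : ℕ} {s : Finset ℕ} (h : k ∉ s) : fgs (insert k s) = 2 ^ k + fgs s :=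
  Finset.sum_insert h

lemma famLE_left (hd : 2 ≤ d) (hFfin : F.Finite) (hFd : ∀ u ∈ F, u.card = d) :
    famLE (leftComp d F) F := by
  by_cases hLF : leftComp d F = F
  · exact Or.inl hLF
  right
  set D := {w : Finset ℕ | (w ∈ leftComp d F ∧ w ∉ F) ∨ (w ∈ F ∧ w ∉ leftComp d F)} with hDdef
  have hDfin : D.Finite := ((leftComp_finite hd hFfin).union hFfin).subset
    (by rintro w (⟨h, _⟩ | ⟨h, _⟩); exacts [Or.inl h, Or.inr h])
  have hDne : D.Nonempty := by
    by_contra h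
    rw [Set.not_nonempty_iff_eq_empty] at h
    apply hLF
    ext w
    constructor <;> intro hw <;> by_contra hw2
    · exact (h ▸ (Or.inl ⟨hw, hw2⟩ : w ∈ D) : w ∈ (∅ : Set (Finset ℕ)))
    · exact (h ▸ (Or.inr ⟨hw, hw2⟩ : w ∈ D) : w ∈ (∅ : Set (Finset ℕ)))
  obtain ⟨m, hmD, hmax⟩ := Set.exists_max_image D fgs hDfin hDne
  rcases hmD with hm | hm
  · exfalso
    obtain ⟨k, hk⟩ := Set.mem_iUnion.1 hm.1
    obtain ⟨w, hw, rfl⟩ := hk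
    have hwhat : w ∉ hatL F k := fun h => hm.2 h.2
    have hnsub : ¬ hatL F k ⊆ compressionIn {j | k < j} (d - 1) (hatL F k).ncard := by
      intro hsub
      have heq := Set.eq_of_subset_of_ncard_le hsub
        (le_of_eq (compressionIn_ncard (Ioi_inf k) (dm1_ne hd) _))
        (compressionIn_finite (Ioi_inf k) (dm1_ne hd) _)
      rw [← heq] at hw
      exact hwhat hw
    obtain ⟨v, hvhat, hvc⟩ := Set.not_subset.1 hnsub
    have hlt : toColex w < toColex v :=
      lt_of_mem_compressionIn_not_mem hw (hatL_sub hFd hd hvhat) hvc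
    have hm'L : insert k v ∉ leftComp d F := by
      intro hmem
      obtain ⟨k', hk'⟩ := Set.mem_iUnion.1 hmem
      obtain ⟨w', hw', heq⟩ := hk'
      have hp' : k' ∈ insert k v ∧ ∀ x ∈ insert k v, k' ≤ x := by
        rw [heq]; exact LC_mem_props ⟨w', hw', rfl⟩
      have hp : k ∈ insert k v ∧ ∀ x ∈ insert k v, k ≤ x := by
        refine ⟨Finset.mem_insert_self _ _, ?_⟩
        intro x hx
        rcases Finset.mem_insert.1 hx with rfl | hx
        · exact le_rfl
        · exact (hvhat.1 x hx).le
      have hkk : k = k' := le_antisymm (hp.2 _ hp'.1) (hp'.2 _ hp.1)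
      subst hkk
      have hv' : v = w' := by
        have := congrArg (fun s => Finset.erase s k) heq
        simpa [Finset.erase_insert (hatL_not_mem hvhat),
          Finset.erase_insert (LC_not_mem hw')] using this
      exact hvc (hv' ▸ hw')
    have hm'D : insert k v ∈ D := Or.inr ⟨hvhat.2, hm'L⟩
    have h1 := hmax _ hm'D
    rw [fgs_insert (LC_not_mem hw), fgs_insert (hatL_not_mem hvhat)] at h1
    have h2 : fgs w < fgs v := fgs_lt_iff.2 hlt
    omega
  · exact ⟨m, hm.1, hm.2, fun w hw => fgs_le_iff.1 (hmax w hw)⟩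

lemma famLE_right (hd : 2 ≤ d) (hFfin : F.Finite) (hFd : ∀ u ∈ F, u.card = d) :
    famLE (rightComp d F) F := by
  by_cases hLF : rightComp d F = F
  · exact Or.inl hLF
  right
  set D := {w : Finset ℕ | (w ∈ rightComp d F ∧ w ∉ F) ∨ (w ∈ F ∧ w ∉ rightComp d F)} with hDdef
  have hDfin : D.Finite := ((rightComp_finite hd hFfin).union hFfin).subset
    (by rintro w (⟨h, _⟩ | ⟨h, _⟩); exacts [Or.inl h, Or.inr h])
  have hDne : D.Nonempty := by
    by_contra h
    rw [Set.not_nonempty_iff_eq_empty] at h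
    apply hLF
    ext w
    constructor <;> intro hw <;> by_contra hw2
    · exact (h ▸ (Or.inl ⟨hw, hw2⟩ : w ∈ D) : w ∈ (∅ : Set (Finset ℕ)))
    · exact (h ▸ (Or.inr ⟨hw, hw2⟩ : w ∈ D) : w ∈ (∅ : Set (Finset ℕ)))
  obtain ⟨m, hmD, hmax⟩ := Set.exists_max_image D fgs hDfin hDne
  rcases hmD with hm | hm
  · exfalso
    obtain ⟨k, hk⟩ := Set.mem_iUnion.1 hm.1
    obtain ⟨w, hw, rfl⟩ := hk
    have hwhat : w ∉ hatR F k := fun h => hm.2 h.2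
    have hnsub : ¬ hatR F k ⊆ compressionIn Set.univ (d - 1) (hatR F k).ncard := by
      intro hsub
      have heq := Set.eq_of_subset_of_ncard_le hsub
        (le_of_eq (compressionIn_ncard Set.infinite_univ (dm1_ne hd) _))
        (compressionIn_finite Set.infinite_univ (dm1_ne hd) _)
      rw [← heq] at hw
      exact hwhat hw
    obtain ⟨v, hvhat, hvc⟩ := Set.not_subset.1 hnsub
    have hlt : toColex w < toColex v :=
      lt_of_mem_compressionIn_not_mem hw (hatR_sub hFd hd hvhat) hvc
    have hm'L : insert k v ∉ rightComp d F := by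
      intro hmem
      obtain ⟨k', hk'⟩ := Set.mem_iUnion.1 hmem
      obtain ⟨w', hw', heq⟩ := hk'
      have hp' : k' ∈ insert k v ∧ ∀ x ∈ insert k v, x ≤ k' := by
        rw [heq]; exact RC_mem_props hFfin hFd hd ⟨w', hw', rfl⟩
      have hp : k ∈ insert k v ∧ ∀ x ∈ insert k v, x ≤ k := by
        refine ⟨Finset.mem_insert_self _ _, ?_⟩
        intro x hx
        rcases Finset.mem_insert.1 hx with rfl | hx
        · exact le_rfl
        · exact (hvhat.1 x hx).le
      have hkk : k = k' := le_antisymm (hp'.2 _ hp.1) (hp.2 _ hp'.1)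
      subst hkk
      have hv' : v = w' := by
        have := congrArg (fun s => Finset.erase s k) heq
        simpa [Finset.erase_insert (hatR_not_mem hvhat),
          Finset.erase_insert (RC_not_mem hFfin hFd hd hw')] using this
      exact hvc (hv' ▸ hw')
    have hm'D : insert k v ∈ D := Or.inr ⟨hvhat.2, hm'L⟩
    have h1 := hmax _ hm'D
    rw [fgs_insert (RC_not_mem hFfin hFd hd hw), fgs_insert (hatR_not_mem hvhat)] at h1
    have h2 : fgs w < fgs v := fgs_lt_iff.2 hlt
    omega
  · exact ⟨m, hm.1, hm.2, fun w hw => fgs_le_iff.1 (hmax w hw)⟩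

end FamLE

end St7

theorem stmt7 (d : ℕ) (hd : 2 ≤ d) (F : Set (Finset ℕ)) (hFfin : F.Finite)
    (hFd : ∀ u ∈ F, u.card = d) :
    (leftComp d F).ncard = F.ncard ∧ (rightComp d F).ncard = F.ncard ∧
      famLE (leftComp d F) F ∧ famLE (rightComp d F) F :=
  ⟨St7.leftComp_ncard hd hFfin hFd, St7.rightComp_ncard hd hFfin hFd,
    St7.famLE_left hd hFfin hFd, St7.famLE_right hd hFfin hFd⟩
end

section
/- Let d ≥ 2 and let F ⊆ binom(ℕ,d) be a finite family. If F is both left-compressed and right-compressed, then F is shifted. -/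
section Aux

/-- Domination count: `v` has at most as many elements `≥ a` as `u`, for every `a`. -/
def Dcount (v u : Finset ℕ) : Prop :=
  ∀ a : ℕ, (v.filter (a ≤ ·)).card ≤ (u.filter (a ≤ ·)).card

lemma filter_erase_card (s : Finset ℕ) (x a : ℕ) (hx : x ∈ s) :
    ((s.erase x).filter (a ≤ ·)).card
      = (s.filter (a ≤ ·)).card - (if a ≤ x then 1 else 0) := by
  rw [Finset.filter_erase]
  by_cases h : a ≤ x
  · rw [if_pos h, Finset.card_erase_of_mem (Finset.mem_filter.2 ⟨hx, h⟩)]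
  · rw [if_neg h, Finset.erase_eq_of_notMem, Nat.sub_zero]
    simp [h]

lemma list_filter_le (a : ℕ) :
    ∀ {l m : List ℕ}, List.Forall₂ (· ≤ ·) l m →
      (l.filter (fun x => decide (a ≤ x))).length ≤ (m.filter (fun x => decide (a ≤ x))).length := by
  intro l m h
  induction h with
  | nil => simp
  | cons hxy h ih =>
      rename_i x y l' m'
      by_cases hax : a ≤ x
      · have hay : a ≤ y := hax.trans hxy
        simp only [List.filter_cons, decide_eq_true_eq, hax, hay, if_pos, List.length_cons]
        omega
      · by_cases hay : a ≤ y <;>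
          simp only [List.filter_cons, decide_eq_true_eq, hax, hay, if_pos, if_neg,
            not_false_eq_true, List.length_cons] <;> omega

lemma card_filter_sort (v : Finset ℕ) (a : ℕ) :
    ((v.sort (· ≤ ·)).filter (fun x => decide (a ≤ x))).length = (v.filter (a ≤ ·)).card := by
  have h : ((v.sort (· ≤ ·) : List ℕ) : Multiset ℕ) = v.1 := Finset.sort_eq _ _
  rw [← Multiset.coe_card, ← Multiset.filter_coe, h, ← Finset.filter_val, Finset.card_def]

lemma borel_dcount {v u : Finset ℕ} (h : BorelLE v u) : Dcount v u := by
  intro a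
  rw [← card_filter_sort, ← card_filter_sort]
  exact list_filter_le a h

lemma borel_card {v u : Finset ℕ} (h : BorelLE v u) : v.card = u.card := by
  have := List.Forall₂.length_eq h
  simpa using this

lemma dcount_colex {v u : Finset ℕ} (h : Dcount v u) :
    toColex v ≤ toColex u := by
  rw [Finset.Colex.toColex_le_toColex]
  intro a hav hau
  set U := u.filter (a ≤ ·) with hU
  set V := v.filter (a ≤ ·) with hV
  have h1 := Finset.card_sdiff_add_card_inter V U
  have h2 := Finset.card_sdiff_add_card_inter U V
  have h3 : (V ∩ U).card = (U ∩ V).card := by rw [Finset.inter_comm]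
  have haVU : a ∈ V \ U := Finset.mem_sdiff.2
    ⟨Finset.mem_filter.2 ⟨hav, le_refl a⟩, fun hc => hau (Finset.mem_filter.1 hc).1⟩
  have h4 : 0 < (V \ U).card := Finset.card_pos.2 ⟨a, haVU⟩
  have h5 := h a
  rw [← hV, ← hU] at h5
  have hne : (U \ V).Nonempty := Finset.card_pos.1 (by omega)
  obtain ⟨b, hb⟩ := hne
  rw [Finset.mem_sdiff] at hb
  obtain ⟨hbU, hbV⟩ := hb
  rw [hU, Finset.mem_filter] at hbU
  exact ⟨b, hbU.1, fun hbv => hbV (Finset.mem_filter.2 ⟨hbv, hbU.2⟩), hbU.2⟩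

lemma dcount_insert_erase {u : Finset ℕ} {m k : ℕ} (hk : k ∈ u) (hmk : m ≤ k)
    (hm : m ∉ u.erase k) : Dcount (insert m (u.erase k)) u := by
  intro a
  rw [Finset.filter_insert]
  by_cases ham : a ≤ m
  · have hak : a ≤ k := ham.trans hmk
    have h1 := filter_erase_card u k a hk
    rw [if_pos hak] at h1
    have h2 : 0 < (u.filter (a ≤ ·)).card :=
      Finset.card_pos.2 ⟨k, Finset.mem_filter.2 ⟨hk, hak⟩⟩
    rw [if_pos ham, Finset.card_insert_of_notMem (fun hc => hm (Finset.mem_filter.1 hc).1)]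
    omega
  · rw [if_neg ham]
    exact Finset.card_le_card (Finset.filter_subset_filter _ (Finset.erase_subset _ _))

lemma dcount_erase {v u : Finset ℕ} {m k : ℕ} (hm : m ∈ v) (hk : k ∈ u)
    (hmk : m ≤ k) (hkmin : ∀ x ∈ u, k ≤ x) (hcard : v.card ≤ u.card)
    (h : Dcount v u) : Dcount (v.erase m) (u.erase k) := by
  intro a
  rw [filter_erase_card v m a hm, filter_erase_card u k a hk]
  have hvu := h a
  by_cases ham : a ≤ m
  · rw [if_pos ham, if_pos (ham.trans hmk)]; omega
  · rw [if_neg ham]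
    by_cases hak : a ≤ k
    · rw [if_pos hak]
      have h1 : (v.filter (a ≤ ·)).card ≤ v.card - 1 := by
        have hsub : v.filter (a ≤ ·) ⊆ v.erase m := fun x hx => by
          rw [Finset.mem_filter] at hx
          exact Finset.mem_erase.2 ⟨fun he => ham (he ▸ hx.2), hx.1⟩
        have h6 := Finset.card_le_card hsub
        rwa [Finset.card_erase_of_mem hm] at h6
      have h2 : (u.filter (a ≤ ·)).card = u.card := by
        rw [Finset.filter_eq_self.2 (fun x hx => hak.trans (hkmin x hx))]
      omega
    · rw [if_neg hak]; omega

end Aux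

theorem stmt8 (d : ℕ) (hd : 2 ≤ d) (F : Set (Finset ℕ)) (hFfin : F.Finite)
    (hFd : ∀ u ∈ F, u.card = d)
    (hl : ∀ k : ℕ, IsCompressedIn {j | k < j} (d - 1) (hatL F k))
    (hr : ∀ k : ℕ, IsCompressedIn Set.univ (d - 1) (hatR F k)) :
    IsShifted F := by
  intro u hu v hbv
  have hvu : Dcount v u := borel_dcount hbv
  have hucard : u.card = d := hFd u hu
  have hvcard : v.card = d := (borel_card hbv).trans hucard
  have hune : u.Nonempty := Finset.card_pos.1 (by omega)
  have hvne : v.Nonempty := Finset.card_pos.1 (by omega)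
  set k1 := u.min' hune with hk1
  set m1 := v.min' hvne with hm1
  have hk1u : k1 ∈ u := u.min'_mem hune
  have hm1v : m1 ∈ v := v.min'_mem hvne
  have humin : ∀ x ∈ u, k1 ≤ x := fun x hx => u.min'_le x hx
  have hvmin : ∀ x ∈ v, m1 ≤ x := fun x hx => v.min'_le x hx
  have hm1k1 : m1 ≤ k1 := by
    have h1 : v.filter (m1 ≤ ·) = v := Finset.filter_eq_self.2 hvmin
    have h2 := hvu m1
    rw [h1] at h2
    have h3 : u.filter (m1 ≤ ·) = u :=
      Finset.eq_of_subset_of_card_le (Finset.filter_subset _ _) (by omega)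
    have h4 : k1 ∈ u.filter (m1 ≤ ·) := h3.symm ▸ hk1u
    exact (Finset.mem_filter.1 h4).2
  have hm1notu' : m1 ∉ u.erase k1 := fun hc => by
    have h5 := humin _ (Finset.mem_of_mem_erase hc)
    have h6 := Finset.ne_of_mem_erase hc
    omega
  set w := insert m1 (u.erase k1) with hwdef
  have hw : w ∈ F := by
    rcases eq_or_lt_of_le hm1k1 with heq | hlt
    · rw [hwdef, heq, Finset.insert_erase hk1u]; exact hu
    · set k' := u.max' hune with hk'
      have hk'u : k' ∈ u := u.max'_mem hune
      have humax : ∀ x ∈ u, x ≤ k' := fun x hx => u.le_max' x hx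
      have hk1k' : k1 < k' := Finset.min'_lt_max'_of_card u (by omega)
      have hm1u : m1 ∉ u := fun hc => by have := humin _ hc; omega
      have hk1' : k1 ∈ u.erase k' := Finset.mem_erase.2 ⟨by omega, hk1u⟩
      have hk'w : k' ∈ w := Finset.mem_insert.2 (Or.inr (Finset.mem_erase.2 ⟨by omega, hk'u⟩))
      have hwk' : w.erase k' = insert m1 ((u.erase k').erase k1) := by
        rw [hwdef, Finset.erase_insert_of_ne (by omega : m1 ≠ k')]
        congr 1
        ext x
        simp only [Finset.mem_erase]
        tauto
      have hD : Dcount (w.erase k') (u.erase k') := by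
        rw [hwk']
        exact dcount_insert_erase hk1' hm1k1
          (fun hc => hm1u (Finset.mem_of_mem_erase (Finset.mem_of_mem_erase hc)))
      have hhatR : u.erase k' ∈ hatR F k' :=
        ⟨fun x hx => lt_of_le_of_ne (humax x (Finset.mem_of_mem_erase hx))
          (Finset.ne_of_mem_erase hx),
         by rw [Finset.insert_erase hk'u]; exact hu⟩
      have hwc : w.card = d := by
        rw [hwdef, Finset.card_insert_of_notMem hm1notu', Finset.card_erase_of_mem hk1u, hucard]
        omega
      have hcard' : (w.erase k').card = d - 1 := by
        rw [Finset.card_erase_of_mem hk'w, hwc]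
      have hmem := (hr k').2 (u.erase k') hhatR (w.erase k') (by simp) hcard' (dcount_colex hD)
      have h7 : insert k' (w.erase k') ∈ F := hmem.2
      rwa [Finset.insert_erase hk'w] at h7
  have hhatL : u.erase k1 ∈ hatL F m1 := by
    refine ⟨fun x hx => ?_, ?_⟩
    · have h8 := humin _ (Finset.mem_of_mem_erase hx)
      have h9 := Finset.ne_of_mem_erase hx
      omega
    · exact hwdef ▸ hw
  have hD2 : Dcount (v.erase m1) (u.erase k1) :=
    dcount_erase hm1v hk1u hm1k1 humin (by omega) hvu
  have hmem := (hl m1).2 (u.erase k1) hhatL (v.erase m1)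
    (fun x hx => by
      simp only [Finset.coe_erase, Set.mem_diff, Set.mem_singleton_iff, Finset.mem_coe] at hx
      have h10 := hvmin _ hx.1
      have h11 := hx.2
      simp only [Set.mem_setOf_eq]
      omega)
    (by rw [Finset.card_erase_of_mem hm1v, hvcard])
    (dcount_colex hD2)
  have h12 : insert m1 (v.erase m1) ∈ F := hmem.2
  rwa [Finset.insert_erase hm1v] at h12
end
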